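/- arXiv:math/0301217 — 3 statements merged into one kernel-verified Lean document; each statement's English description precedes it below -/
import Mathlib

section
/- Given decreasing functions φ, ψ : [1,+∞) → (0,+∞) with lim_{t→∞} φ(t) = lim_{t→∞} ψ(t) = 0, there exist a continuous function f on [-1,1] that is not identically zero and a strictly increasing sequence (n_j) of positive integers such that for every j: E_{n_j}(f) ≤ ψ(n_j), and |f(x)| ≤ e^{-n_j} for all x with |x| ≤ φ(n_j). -/
set_option maxHeartbeats 1000000

open Filter MeasureTheory Set

/-- Best uniform approximation error by polynomials of degree ≤ n on [-1,1]. -/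
noncomputable def En (f : ℝ → ℝ) (n : ℕ) : ℝ :=
  sInf ((fun P : Polynomial ℝ => sSup ((fun x => |f x - P.eval x|) '' Set.Icc (-1:ℝ) 1)) ''
    {P : Polynomial ℝ | P.natDegree ≤ n})

lemma En_le (f : ℝ → ℝ) (n : ℕ) (P : Polynomial ℝ) (hd : P.natDegree ≤ n) (B : ℝ)
    (hB : 0 ≤ B) (h : ∀ x ∈ Set.Icc (-1:ℝ) 1, |f x - P.eval x| ≤ B) : En f n ≤ B := by
  have hmem : sSup ((fun x => |f x - P.eval x|) '' Set.Icc (-1:ℝ) 1) ∈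
      ((fun P : Polynomial ℝ => sSup ((fun x => |f x - P.eval x|) '' Set.Icc (-1:ℝ) 1)) ''
        {P : Polynomial ℝ | P.natDegree ≤ n}) := ⟨P, hd, rfl⟩
  have hbdd : BddBelow ((fun P : Polynomial ℝ => sSup ((fun x => |f x - P.eval x|) ''
      Set.Icc (-1:ℝ) 1)) '' {P : Polynomial ℝ | P.natDegree ≤ n}) := by
    refine ⟨0, ?_⟩
    rintro y ⟨Q, -, rfl⟩
    refine Real.sSup_nonneg ?_
    rintro z ⟨x, -, rfl⟩
    exact abs_nonneg _
  refine le_trans (csInf_le hbdd hmem) ?_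
  refine Real.sSup_le ?_ hB
  rintro z ⟨x, hx, rfl⟩
  exact h x hx

noncomputable def Jterm (m k : ℕ) (s : ℝ) : ℝ :=
  ((2*m+1).choose k : ℝ) * s^k * (1-s)^(2*m+1-k)

noncomputable def Jfun (m : ℕ) (s : ℝ) : ℝ :=
  ∑ k ∈ Finset.Ico (m+1) (2*m+2), Jterm m k s

lemma Jterm_nonneg (m k : ℕ) {s : ℝ} (h0 : 0 ≤ s) (h1 : s ≤ 1) : 0 ≤ Jterm m k s := by
  unfold Jterm
  have : (0:ℝ) ≤ 1 - s := by linarith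
  positivity

lemma Jfun_add_eq_one (m : ℕ) (s : ℝ) :
    (∑ k ∈ Finset.range (m+1), Jterm m k s) + Jfun m s = 1 := by
  have h := add_pow s (1-s) (2*m+1)
  have hs : s + (1-s) = 1 := by ring
  rw [hs, one_pow] at h
  have hsplit : (∑ k ∈ Finset.range (m+1), Jterm m k s) + Jfun m s
      = ∑ k ∈ Finset.range (2*m+2), Jterm m k s := by
    unfold Jfun
    rw [Finset.range_eq_Ico, Finset.range_eq_Ico]
    exact Finset.sum_Ico_consecutive (fun k => Jterm m k s) (Nat.zero_le (m+1)) (by omega : m+1 ≤ 2*m+2)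
  rw [hsplit]
  rw [h]
  apply Finset.sum_congr rfl
  intro k _
  unfold Jterm
  ring

lemma choose_sum_le (m : ℕ) (I : Finset ℕ) (hI : I ⊆ Finset.range (2*m+2)) :
    (∑ k ∈ I, ((2*m+1).choose k : ℝ)) ≤ 2 * 4^m := by
  have h1 : (∑ k ∈ I, (2*m+1).choose k) ≤ ∑ k ∈ Finset.range (2*m+2), (2*m+1).choose k :=
    Finset.sum_le_sum_of_subset hI
  have h2 : (∑ k ∈ Finset.range (2*m+2), (2*m+1).choose k) = 2^(2*m+1) := by
    rw [show 2*m+2 = (2*m+1)+1 by omega]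
    exact Nat.sum_range_choose _
  have h3 : (2:ℕ)^(2*m+1) = 2 * 4^m := by
    rw [pow_succ']
    congr 1
    rw [pow_mul]
    norm_num
  have : (∑ k ∈ I, (2*m+1).choose k) ≤ 2 * 4^m := by omega
  calc (∑ k ∈ I, ((2*m+1).choose k : ℝ)) = ((∑ k ∈ I, (2*m+1).choose k : ℕ) : ℝ) := by
        push_cast; ring
    _ ≤ ((2 * 4^m : ℕ) : ℝ) := by exact_mod_cast this
    _ = 2 * 4^m := by push_cast; ring

lemma Jfun_nonneg (m : ℕ) {s : ℝ} (h0 : 0 ≤ s) (h1 : s ≤ 1) : 0 ≤ Jfun m s :=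
  Finset.sum_nonneg fun k _ => Jterm_nonneg m k h0 h1

lemma Jfun_le_one (m : ℕ) {s : ℝ} (h0 : 0 ≤ s) (h1 : s ≤ 1) : Jfun m s ≤ 1 := by
  have h := Jfun_add_eq_one m s
  have h2 : 0 ≤ ∑ k ∈ Finset.range (m+1), Jterm m k s :=
    Finset.sum_nonneg fun k _ => Jterm_nonneg m k h0 h1
  linarith

lemma Jfun_le (m : ℕ) {s : ℝ} (h0 : 0 ≤ s) (h1 : s ≤ 1) :
    Jfun m s ≤ 2 * 4^m * s^(m+1) := by
  have hterm : ∀ k ∈ Finset.Ico (m+1) (2*m+2),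
      Jterm m k s ≤ ((2*m+1).choose k : ℝ) * s^(m+1) := by
    intro k hk
    rw [Finset.mem_Ico] at hk
    unfold Jterm
    have h1s : (0:ℝ) ≤ 1 - s := by linarith
    have hsk : s^k ≤ s^(m+1) := pow_le_pow_of_le_one h0 h1 hk.1
    have hpow : (1-s)^(2*m+1-k) ≤ 1 := pow_le_one₀ h1s (by linarith)
    calc ((2*m+1).choose k : ℝ) * s^k * (1-s)^(2*m+1-k)
        ≤ ((2*m+1).choose k : ℝ) * s^k * 1 := by
          apply mul_le_mul_of_nonneg_left hpow
          positivity
      _ = ((2*m+1).choose k : ℝ) * s^k := by ring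
      _ ≤ ((2*m+1).choose k : ℝ) * s^(m+1) := by
          apply mul_le_mul_of_nonneg_left hsk
          positivity
  calc Jfun m s ≤ ∑ k ∈ Finset.Ico (m+1) (2*m+2), ((2*m+1).choose k : ℝ) * s^(m+1) :=
        Finset.sum_le_sum hterm
    _ = (∑ k ∈ Finset.Ico (m+1) (2*m+2), ((2*m+1).choose k : ℝ)) * s^(m+1) := by
        rw [Finset.sum_mul]
    _ ≤ 2 * 4^m * s^(m+1) := by
        apply mul_le_mul_of_nonneg_right
        · apply choose_sum_le
          intro k hk
          rw [Finset.mem_Ico] at hk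
          rw [Finset.mem_range]
          omega
        · positivity

lemma one_sub_Jfun_le (m : ℕ) {s : ℝ} (h0 : 0 ≤ s) (h1 : s ≤ 1) :
    1 - Jfun m s ≤ 2 * 4^m * (1-s)^(m+1) := by
  have h := Jfun_add_eq_one m s
  have h1s : (0:ℝ) ≤ 1 - s := by linarith
  have hterm : ∀ k ∈ Finset.range (m+1),
      Jterm m k s ≤ ((2*m+1).choose k : ℝ) * (1-s)^(m+1) := by
    intro k hk
    rw [Finset.mem_range] at hk
    unfold Jterm
    have h1s : (0:ℝ) ≤ 1 - s := by linarith
    have hsk : s^k ≤ 1 := pow_le_one₀ h0 h1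
    have hpow : (1-s)^(2*m+1-k) ≤ (1-s)^(m+1) := pow_le_pow_of_le_one h1s (by linarith) (by omega)
    calc ((2*m+1).choose k : ℝ) * s^k * (1-s)^(2*m+1-k)
        ≤ ((2*m+1).choose k : ℝ) * 1 * (1-s)^(2*m+1-k) := by
          apply mul_le_mul_of_nonneg_right _ (by positivity)
          apply mul_le_mul_of_nonneg_left hsk (by positivity)
      _ = ((2*m+1).choose k : ℝ) * (1-s)^(2*m+1-k) := by ring
      _ ≤ ((2*m+1).choose k : ℝ) * (1-s)^(m+1) := by
          apply mul_le_mul_of_nonneg_left hpow (by positivity)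
  have : 1 - Jfun m s = ∑ k ∈ Finset.range (m+1), Jterm m k s := by linarith
  rw [this]
  calc (∑ k ∈ Finset.range (m+1), Jterm m k s)
      ≤ ∑ k ∈ Finset.range (m+1), ((2*m+1).choose k : ℝ) * (1-s)^(m+1) :=
        Finset.sum_le_sum hterm
    _ = (∑ k ∈ Finset.range (m+1), ((2*m+1).choose k : ℝ)) * (1-s)^(m+1) := by
        rw [Finset.sum_mul]
    _ ≤ 2 * 4^m * (1-s)^(m+1) := by
        apply mul_le_mul_of_nonneg_right
        · apply choose_sum_le
          intro k hk
          rw [Finset.mem_range] at hk ⊢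
          omega
        · exact pow_nonneg h1s _

noncomputable def uPoly (N : ℕ) : Polynomial ℝ := 1 - (1 - Polynomial.X^2)^N

noncomputable def SPoly (m N : ℕ) : Polynomial ℝ :=
  ∑ k ∈ Finset.Ico (m+1) (2*m+2),
    Polynomial.C ((2*m+1).choose k : ℝ) * (uPoly N)^k * (1 - uPoly N)^(2*m+1-k)

lemma uPoly_eval (N : ℕ) (x : ℝ) : (uPoly N).eval x = 1 - (1-x^2)^N := by
  simp [uPoly]

lemma SPoly_eval (m N : ℕ) (x : ℝ) : (SPoly m N).eval x = Jfun m ((uPoly N).eval x) := by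
  unfold SPoly Jfun Jterm
  rw [Polynomial.eval_finset_sum]
  apply Finset.sum_congr rfl
  intro k _
  simp

lemma uPoly_natDegree (N : ℕ) : (uPoly N).natDegree ≤ 2*N := by
  unfold uPoly
  refine (Polynomial.natDegree_sub_le _ _).trans ?_
  simp only [Polynomial.natDegree_one, max_le_iff]
  constructor
  · omega
  · refine (Polynomial.natDegree_pow_le).trans ?_
    have h1 : (1 - Polynomial.X^2 : Polynomial ℝ).natDegree ≤ 2 := by
      refine (Polynomial.natDegree_sub_le _ _).trans ?_
      simp [Polynomial.natDegree_one, Polynomial.natDegree_X_pow]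
    calc N * (1 - Polynomial.X^2 : Polynomial ℝ).natDegree ≤ N * 2 :=
          Nat.mul_le_mul_left N h1
      _ = 2*N := by ring

lemma one_sub_uPoly (N : ℕ) : 1 - uPoly N = (1 - Polynomial.X^2)^N := by
  unfold uPoly; ring

lemma SPoly_natDegree (m N : ℕ) : (SPoly m N).natDegree ≤ 2*N*(2*m+1) := by
  unfold SPoly
  apply Polynomial.natDegree_sum_le_of_forall_le
  intro k hk
  rw [Finset.mem_Ico] at hk
  refine (Polynomial.natDegree_mul_le).trans ?_
  have h1 : (Polynomial.C ((2*m+1).choose k : ℝ) * (uPoly N)^k).natDegree ≤ 2*N*k := by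
    refine (Polynomial.natDegree_mul_le).trans ?_
    rw [Polynomial.natDegree_C]
    refine le_trans (by omega : 0 + ((uPoly N)^k).natDegree ≤ ((uPoly N)^k).natDegree) ?_
    refine (Polynomial.natDegree_pow_le).trans ?_
    calc k * (uPoly N).natDegree ≤ k * (2*N) := Nat.mul_le_mul_left k (uPoly_natDegree N)
      _ = 2*N*k := by ring
  have h2 : ((1 - uPoly N)^(2*m+1-k)).natDegree ≤ 2*N*(2*m+1-k) := by
    rw [one_sub_uPoly]
    rw [← pow_mul]
    refine (Polynomial.natDegree_pow_le).trans ?_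
    have h3 : (1 - Polynomial.X^2 : Polynomial ℝ).natDegree ≤ 2 := by
      refine (Polynomial.natDegree_sub_le _ _).trans ?_
      simp [Polynomial.natDegree_one, Polynomial.natDegree_X_pow]
    calc (N*(2*m+1-k)) * (1 - Polynomial.X^2 : Polynomial ℝ).natDegree
        ≤ (N*(2*m+1-k)) * 2 := Nat.mul_le_mul_left _ h3
      _ = 2*N*(2*m+1-k) := by ring
  calc (Polynomial.C ((2*m+1).choose k : ℝ) * (uPoly N)^k).natDegree
        + ((1 - uPoly N)^(2*m+1-k)).natDegree
      ≤ 2*N*k + 2*N*(2*m+1-k) := Nat.add_le_add h1 h2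
    _ ≤ 2*N*(2*m+1) := by
        have h4 : k + (2*m+1-k) = 2*m+1 := by omega
        have : 2*N*k + 2*N*(2*m+1-k) = 2*N*(k + (2*m+1-k)) := by ring
        rw [this, h4]

def GoodInv (φ : ℝ → ℝ) (P : Polynomial ℝ) (n : ℕ) : Prop :=
  1 ≤ n ∧ P.natDegree ≤ n ∧ P.eval 0 = 0 ∧ φ n ≤ 1 ∧
  (∀ x ∈ Set.Icc (-1:ℝ) 1, |P.eval x| ≤ 2) ∧
  (∀ x : ℝ, |x| ≤ φ n → |P.eval x| ≤ Real.exp (-(n:ℝ))/2)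

lemma exp_neg_one_le_half : Real.exp (-1) ≤ 1/2 := by
  rw [Real.exp_neg]
  rw [inv_le_comm₀ (Real.exp_pos 1) (by norm_num)]
  have := Real.add_one_le_exp 1
  linarith

-- range facts for u at a point
lemma uPoly_range (N : ℕ) {x : ℝ} (hx : |x| ≤ 1) :
    0 ≤ (uPoly N).eval x ∧ (uPoly N).eval x ≤ 1 := by
  rw [uPoly_eval]
  have hx2 : x^2 ≤ 1 := by
    have := sq_abs x
    nlinarith [abs_nonneg x]
  have h0 : (0:ℝ) ≤ 1 - x^2 := by linarith
  constructor
  · have : (1-x^2)^N ≤ 1 := pow_le_one₀ h0 (by nlinarith [sq_nonneg x])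
    linarith
  · have : 0 ≤ (1-x^2)^N := pow_nonneg h0 N
    linarith

lemma base_exists (φ : ℝ → ℝ) (hφ0 : Tendsto φ atTop (nhds 0)) :
    ∃ (P : Polynomial ℝ) (n : ℕ), GoodInv φ P n ∧ P.eval 1 = 1 := by
  have hev : ∀ᶠ s in atTop, φ s < Real.exp (-2) :=
    hφ0 (Iio_mem_nhds (Real.exp_pos _))
  obtain ⟨T, hT⟩ := eventually_atTop.mp hev
  set d : ℕ := max 1 ⌈max T 0⌉₊ with hd
  have hd1 : 1 ≤ d := le_max_left _ _
  have hdT : (d:ℝ) ≥ T := by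
    have h1 : (⌈max T 0⌉₊ : ℝ) ≥ max T 0 := Nat.le_ceil _
    have h2 : (d:ℝ) ≥ (⌈max T 0⌉₊ : ℝ) := by
      exact_mod_cast le_max_right 1 ⌈max T 0⌉₊
    calc (d:ℝ) ≥ (⌈max T 0⌉₊ : ℝ) := h2
      _ ≥ max T 0 := h1
      _ ≥ T := le_max_left _ _
  have hφd : φ d < Real.exp (-2) := hT _ hdT
  have hexp2 : Real.exp (-2) ≤ 1 := Real.exp_le_one_iff.mpr (by norm_num)
  refine ⟨Polynomial.X^d, d, ⟨hd1, ?_, ?_, ?_, ?_, ?_⟩, by simp⟩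
  · simp [Polynomial.natDegree_X_pow]
  · simp [zero_pow (by omega : d ≠ 0)]
  · linarith
  · intro x hx
    have hx1 : |x| ≤ 1 := abs_le.mpr ⟨hx.1, hx.2⟩
    simp only [Polynomial.eval_pow, Polynomial.eval_X]
    rw [abs_pow]
    calc |x|^d ≤ 1^d := pow_le_pow_left₀ (abs_nonneg x) hx1 d
      _ = 1 := one_pow d
      _ ≤ 2 := by norm_num
  · intro x hx
    simp only [Polynomial.eval_pow, Polynomial.eval_X]
    rw [abs_pow]
    have h1 : |x| ≤ Real.exp (-2) := le_trans hx hφd.le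
    have h2 : |x|^d ≤ (Real.exp (-2))^d := pow_le_pow_left₀ (abs_nonneg x) h1 d
    have h3 : (Real.exp (-2))^d = Real.exp (-(d:ℝ)) * Real.exp (-(d:ℝ)) := by
      rw [← Real.exp_nat_mul, ← Real.exp_add]
      congr 1
      ring
    have h4 : Real.exp (-(d:ℝ)) ≤ 1/2 := by
      calc Real.exp (-(d:ℝ)) ≤ Real.exp (-1) := by
            apply Real.exp_le_exp.mpr
            have : (1:ℝ) ≤ (d:ℝ) := by exact_mod_cast hd1
            linarith
        _ ≤ 1/2 := exp_neg_one_le_half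
    calc |x|^d ≤ Real.exp (-(d:ℝ)) * Real.exp (-(d:ℝ)) := by rw [← h3]; exact h2
      _ ≤ Real.exp (-(d:ℝ)) * (1/2) := by
          apply mul_le_mul_of_nonneg_left h4 (Real.exp_pos _).le
      _ = Real.exp (-(d:ℝ))/2 := by ring

lemma step_exists (φ ψ : ℝ → ℝ)
    (hφpos : ∀ x, 1 ≤ x → 0 < φ x) (hψpos : ∀ x, 1 ≤ x → 0 < ψ x)
    (hφanti : AntitoneOn φ (Set.Ici (1:ℝ))) (hφ0 : Tendsto φ atTop (nhds 0))
    (j : ℕ) (P : Polynomial ℝ) (n : ℕ) (h : GoodInv φ P n) :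
    ∃ (P' : Polynomial ℝ) (n' : ℕ), GoodInv φ P' n' ∧ n < n' ∧
      ∀ x ∈ Set.Icc (-1:ℝ) 1, |P'.eval x - P.eval x| ≤
        min (ψ n) (Real.exp (-(n:ℝ))) * (1/2)^(j+2) := by
  obtain ⟨h1, h2, h3, h4, h5, -⟩ := h
  have hn1R : (1:ℝ) ≤ (n:ℝ) := by exact_mod_cast h1
  set γ : ℝ := min (ψ n) (Real.exp (-(n:ℝ))) * (1/2)^(j+2) with hγdef
  have hγpos : 0 < γ := by
    apply mul_pos
    · exact lt_min (hψpos n hn1R) (Real.exp_pos _)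
    · positivity
  -- choose r
  have hc : ContinuousAt (fun x : ℝ => P.eval x) 0 := (Polynomial.continuous_aeval P).continuousAt
  rw [Metric.continuousAt_iff] at hc
  obtain ⟨δ, hδpos, hδ⟩ := hc γ hγpos
  set r : ℝ := min (δ/2) 1 with hrdef
  have hr0 : 0 < r := lt_min (by linarith) one_pos
  have hr1 : r ≤ 1 := min_le_right _ _
  have hrP : ∀ x : ℝ, |x| ≤ r → |P.eval x| ≤ γ := by
    intro x hx
    have hdist : dist x 0 < δ := by
      rw [Real.dist_eq, sub_zero]
      calc |x| ≤ r := hx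
        _ ≤ δ/2 := min_le_left _ _
        _ < δ := by linarith
    have := hδ hdist
    rw [Real.dist_eq, h3, sub_zero] at this
    exact this.le
  -- choose N
  have hrr : 1 - r^2 < 1 := by nlinarith
  have hrr0 : 0 ≤ 1 - r^2 := by nlinarith
  have hNev : ∀ᶠ N : ℕ in atTop, (1-r^2)^N < 1/8 :=
    (tendsto_pow_atTop_nhds_zero_of_lt_one hrr0 hrr) (Iio_mem_nhds (by norm_num))
  obtain ⟨N0, hN0⟩ := eventually_atTop.mp hNev
  set N : ℕ := N0 + 1 with hNdef
  have hN1 : 1 ≤ N := by omega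
  have hN8 : (1-r^2)^N ≤ 1/8 := (hN0 N (by omega)).le
  -- constants
  set d : ℕ := P.natDegree with hddef
  set A : ℕ := d + n + 2 + 6*N with hAdef
  set ε₀ : ℝ := min (Real.exp (-(A:ℝ)) / (4*N)) 1 with hε₀def
  have hε₀pos : 0 < ε₀ := by
    apply lt_min
    · apply div_pos (Real.exp_pos _)
      have : (1:ℝ) ≤ (N:ℝ) := by exact_mod_cast hN1
      linarith
    · norm_num
  obtain ⟨T, hT⟩ := eventually_atTop.mp (hφ0 (Iio_mem_nhds hε₀pos))
  obtain ⟨m1, hm1⟩ := exists_pow_lt_of_lt_one hγpos (by norm_num : (1/2:ℝ) < 1)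
  set m : ℕ := max m1 ⌈max T 0⌉₊ with hmdef
  have hmγ : ((1:ℝ)/2)^m ≤ γ := by
    calc ((1:ℝ)/2)^m ≤ (1/2)^m1 :=
          pow_le_pow_of_le_one (by norm_num) (by norm_num) (le_max_left _ _)
      _ ≤ γ := hm1.le
  set D : ℕ := d + 2*N*(2*m+1) with hDdef
  set n' : ℕ := max D (n+1) with hn'def
  have hnn' : n < n' := by omega
  have hn'1 : 1 ≤ n' := by omega
  have hn'1R : (1:ℝ) ≤ (n':ℝ) := by exact_mod_cast hn'1
  have hn'm : m ≤ n' := by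
    have : 2*1*(2*m+1) ≤ 2*N*(2*m+1) := Nat.mul_le_mul_right _ (by omega)
    omega
  have hφn' : φ n' < ε₀ := by
    apply hT
    have hceil : (⌈max T 0⌉₊ : ℝ) ≥ max T 0 := Nat.le_ceil _
    have hmceil : (⌈max T 0⌉₊ : ℕ) ≤ m := le_max_right _ _
    have : ((⌈max T 0⌉₊ : ℕ) : ℝ) ≤ (n' : ℝ) := by
      exact_mod_cast le_trans hmceil hn'm
    calc T ≤ max T 0 := le_max_left _ _
      _ ≤ (⌈max T 0⌉₊ : ℝ) := hceil
      _ ≤ (n' : ℝ) := this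
  set t : ℝ := φ n' with htdef
  have ht0 : 0 < t := hφpos n' hn'1R
  have ht1 : t ≤ 1 := le_trans hφn'.le (min_le_right _ _)
  have htA : 4*(N:ℝ)*t^2 ≤ Real.exp (-(A:ℝ)) := by
    have hNR : (1:ℝ) ≤ (N:ℝ) := by exact_mod_cast hN1
    have h4N : (0:ℝ) < 4*(N:ℝ) := by linarith
    have htε : t ≤ Real.exp (-(A:ℝ)) / (4*N) := le_trans hφn'.le (min_le_left _ _)
    calc 4*(N:ℝ)*t^2 ≤ 4*(N:ℝ)*t := by nlinarith [mul_nonneg (mul_nonneg (by linarith : (0:ℝ) ≤ 4*(N:ℝ)) ht0.le) (by linarith : (0:ℝ) ≤ 1 - t)]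
      _ ≤ 4*(N:ℝ)*(Real.exp (-(A:ℝ)) / (4*N)) := by
          apply mul_le_mul_of_nonneg_left htε h4N.le
      _ = Real.exp (-(A:ℝ)) := by field_simp
  have hφn'n : φ n' ≤ φ n := by
    apply hφanti (mem_Ici.mpr hn1R) (mem_Ici.mpr hn'1R)
    exact_mod_cast hnn'.le
  set S : Polynomial ℝ := SPoly m N with hSdef
  refine ⟨P * S, n', ⟨hn'1, ?_, ?_, ?_, ?_, ?_⟩, hnn', ?_⟩
  · -- degree
    refine (Polynomial.natDegree_mul_le).trans ?_
    have := SPoly_natDegree m N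
    have : S.natDegree ≤ 2*N*(2*m+1) := this
    omega
  · simp [h3]
  · exact le_trans hφn'.le (le_trans (min_le_right _ _) le_rfl)
  · -- norm ≤ 2
    intro x hx
    have hx1 : |x| ≤ 1 := abs_le.mpr ⟨hx.1, hx.2⟩
    obtain ⟨hu0, hu1⟩ := uPoly_range N hx1
    rw [Polynomial.eval_mul]
    rw [abs_mul]
    have hS1 : |S.eval x| ≤ 1 := by
      rw [hSdef, SPoly_eval]
      rw [abs_of_nonneg (Jfun_nonneg m hu0 hu1)]
      exact Jfun_le_one m hu0 hu1
    calc |P.eval x| * |S.eval x| ≤ 2 * 1 := by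
          apply mul_le_mul (h5 x hx) hS1 (abs_nonneg _) (by norm_num)
      _ = 2 := by ring
  · -- flat
    intro x hx
    have hxt : |x| ≤ t := hx
    have hx1 : |x| ≤ 1 := le_trans hxt ht1
    have hxIcc : x ∈ Set.Icc (-1:ℝ) 1 := abs_le.mp hx1
    obtain ⟨hu0, hu1⟩ := uPoly_range N hx1
    have hx2t : x^2 ≤ t^2 := by
      have := sq_abs x
      nlinarith [abs_nonneg x]
    have huNx : (uPoly N).eval x ≤ (N:ℝ) * t^2 := by
      rw [uPoly_eval]
      have hber := one_add_mul_le_pow (a := -x^2) (by nlinarith [sq_nonneg x] : (-2:ℝ) ≤ -x^2) N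
      rw [show (1:ℝ) + -x^2 = 1 - x^2 by ring] at hber
      have hNx2 : (N:ℝ)*x^2 ≤ (N:ℝ)*t^2 := by
        apply mul_le_mul_of_nonneg_left hx2t (by positivity)
      nlinarith
    have hJ : Jfun m ((uPoly N).eval x) ≤ 2*4^m*((N:ℝ)*t^2)^(m+1) := by
      calc Jfun m ((uPoly N).eval x) ≤ 2*4^m*((uPoly N).eval x)^(m+1) := Jfun_le m hu0 hu1
        _ ≤ 2*4^m*((N:ℝ)*t^2)^(m+1) := by
            apply mul_le_mul_of_nonneg_left _ (by positivity)
            exact pow_le_pow_left₀ hu0 huNx _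
    rw [Polynomial.eval_mul, abs_mul]
    have hSx : |S.eval x| ≤ 2*4^m*((N:ℝ)*t^2)^(m+1) := by
      rw [hSdef, SPoly_eval, abs_of_nonneg (Jfun_nonneg m hu0 hu1)]
      exact hJ
    have key : (2:ℝ) * (2*4^m*((N:ℝ)*t^2)^(m+1)) ≤ Real.exp (-(n':ℝ))/2 := by
      have e1 : (2:ℝ) * (2*4^m*((N:ℝ)*t^2)^(m+1)) = (4*(N:ℝ)*t^2)^(m+1) := by
        rw [show (4*(N:ℝ)*t^2) = 4*((N:ℝ)*t^2) by ring, mul_pow, pow_succ]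
        ring
      have e2 : (4*(N:ℝ)*t^2)^(m+1) ≤ (Real.exp (-(A:ℝ)))^(m+1) := by
        apply pow_le_pow_left₀ (by positivity) htA
      have e3 : (Real.exp (-(A:ℝ)))^(m+1) = Real.exp (-((A*(m+1) : ℕ) : ℝ)) := by
        rw [← Real.exp_nat_mul]
        congr 1
        push_cast
        ring
      have e4 : n' + 1 ≤ A*(m+1) := by
        have expand : A*(m+1) = (d+n+2)*(m+1) + 6*N*(m+1) := by rw [hAdef]; ring
        have g1 : (d+n+2)*(m+1) ≥ d+n+2 := Nat.le_mul_of_pos_right _ (by omega)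
        have g2 : 6*N*(m+1) ≥ 4*N*m + 2*N := by nlinarith
        have g3 : n' + 1 ≤ D + n + 2 := by omega
        have g4 : D + n + 2 = d + n + 2 + (4*N*m + 2*N) := by rw [hDdef]; ring
        omega
      have e5 : Real.exp (-((A*(m+1) : ℕ) : ℝ)) ≤ Real.exp (-((n':ℝ)+1)) := by
        apply Real.exp_le_exp.mpr
        have : ((n':ℝ)+1) ≤ ((A*(m+1) : ℕ) : ℝ) := by exact_mod_cast e4
        linarith
      have e6 : Real.exp (-((n':ℝ)+1)) ≤ Real.exp (-(n':ℝ))/2 := by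
        rw [show -((n':ℝ)+1) = -(n':ℝ) + -1 by ring, Real.exp_add]
        have := exp_neg_one_le_half
        have hp := (Real.exp_pos (-(n':ℝ))).le
        calc Real.exp (-(n':ℝ)) * Real.exp (-1) ≤ Real.exp (-(n':ℝ)) * (1/2) := by
              apply mul_le_mul_of_nonneg_left this hp
          _ = Real.exp (-(n':ℝ))/2 := by ring
      calc (2:ℝ) * (2*4^m*((N:ℝ)*t^2)^(m+1)) = (4*(N:ℝ)*t^2)^(m+1) := e1
        _ ≤ (Real.exp (-(A:ℝ)))^(m+1) := e2
        _ = Real.exp (-((A*(m+1) : ℕ) : ℝ)) := e3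
        _ ≤ Real.exp (-((n':ℝ)+1)) := e5
        _ ≤ Real.exp (-(n':ℝ))/2 := e6
    calc |P.eval x| * |S.eval x| ≤ 2 * (2*4^m*((N:ℝ)*t^2)^(m+1)) := by
          apply mul_le_mul (h5 x hxIcc) hSx (abs_nonneg _) (by norm_num)
      _ ≤ Real.exp (-(n':ℝ))/2 := key
  · -- diff
    intro x hx
    have hx1 : |x| ≤ 1 := abs_le.mpr ⟨hx.1, hx.2⟩
    obtain ⟨hu0, hu1⟩ := uPoly_range N hx1
    have hJ0 : 0 ≤ Jfun m ((uPoly N).eval x) := Jfun_nonneg m hu0 hu1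
    have hJ1 : Jfun m ((uPoly N).eval x) ≤ 1 := Jfun_le_one m hu0 hu1
    have heq : (P*S).eval x - P.eval x = P.eval x * (S.eval x - 1) := by
      rw [Polynomial.eval_mul]; ring
    rw [heq, abs_mul]
    have hS1x : |S.eval x - 1| = 1 - Jfun m ((uPoly N).eval x) := by
      rw [hSdef, SPoly_eval]
      rw [abs_of_nonpos (by linarith)]
      ring
    rw [hS1x]
    rcases le_or_gt |x| r with hxr | hxr
    · calc |P.eval x| * (1 - Jfun m ((uPoly N).eval x)) ≤ γ * 1 := by
            apply mul_le_mul (hrP x hxr) (by linarith) (by linarith) hγpos.le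
        _ = γ := by ring
    · have hx2r : r^2 ≤ x^2 := by
        have := sq_abs x
        nlinarith [hr0]
      have h1u : 1 - (uPoly N).eval x ≤ (1-r^2)^N := by
        rw [uPoly_eval]
        have : (1-x^2)^N ≤ (1-r^2)^N := by
          apply pow_le_pow_left₀ (by nlinarith [sq_abs x, abs_nonneg x]) (by linarith)
        linarith
      have hq : 1 - Jfun m ((uPoly N).eval x) ≤ 2*4^m*(1/8:ℝ)^(m+1) := by
        calc 1 - Jfun m ((uPoly N).eval x) ≤ 2*4^m*(1 - (uPoly N).eval x)^(m+1) :=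
              one_sub_Jfun_le m hu0 hu1
          _ ≤ 2*4^m*((1-r^2)^N)^(m+1) := by
              apply mul_le_mul_of_nonneg_left _ (by positivity)
              exact pow_le_pow_left₀ (by linarith) h1u _
          _ ≤ 2*4^m*(1/8:ℝ)^(m+1) := by
              apply mul_le_mul_of_nonneg_left _ (by positivity)
              exact pow_le_pow_left₀ (by positivity) hN8 _
      have halg : (2:ℝ) * (2*4^m*(1/8:ℝ)^(m+1)) = (1/2:ℝ)^(m+1) := by
        rw [show ((1:ℝ)/2)^(m+1) = ((4:ℝ) * (1/8))^(m+1) by norm_num]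
        rw [mul_pow, pow_succ]
        ring
      calc |P.eval x| * (1 - Jfun m ((uPoly N).eval x)) ≤ 2 * (2*4^m*(1/8:ℝ)^(m+1)) := by
            apply mul_le_mul (h5 x hx) hq (by linarith) (by norm_num)
        _ = (1/2:ℝ)^(m+1) := halg
        _ ≤ (1/2:ℝ)^m := pow_le_pow_of_le_one (by norm_num) (by norm_num) (by omega)
        _ ≤ γ := hmγ

theorem bernstein_flat_zeros
    (φ ψ : ℝ → ℝ)
    (hφpos : ∀ x, 1 ≤ x → 0 < φ x) (hψpos : ∀ x, 1 ≤ x → 0 < ψ x)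
    (hφanti : AntitoneOn φ (Set.Ici (1:ℝ))) (hψanti : AntitoneOn ψ (Set.Ici (1:ℝ)))
    (hφ0 : Tendsto φ atTop (nhds 0)) (hψ0 : Tendsto ψ atTop (nhds 0)) :
    ∃ f : ℝ → ℝ, ContinuousOn f (Set.Icc (-1:ℝ) 1) ∧
      (∃ x ∈ Set.Icc (-1:ℝ) 1, f x ≠ 0) ∧
      ∃ n : ℕ → ℕ, StrictMono n ∧ (∀ j, 0 < n j) ∧
        ∀ j, En f (n j) ≤ ψ (n j) ∧
          ∀ x : ℝ, |x| ≤ φ (n j) → |f x| ≤ Real.exp (-(n j : ℝ)) := by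
  classical
  obtain ⟨P0, n0, hInv0, hP01⟩ := base_exists φ hφ0
  have key : ∀ (j : ℕ) (s : {p : Polynomial ℝ × ℕ // GoodInv φ p.1 p.2}),
      ∃ s' : {p : Polynomial ℝ × ℕ // GoodInv φ p.1 p.2}, s.1.2 < s'.1.2 ∧
        ∀ x ∈ Set.Icc (-1:ℝ) 1, |s'.1.1.eval x - s.1.1.eval x| ≤
          min (ψ s.1.2) (Real.exp (-(s.1.2:ℝ))) * (1/2)^(j+2) := by
    intro j s
    obtain ⟨P', n', hInv', hlt, hdiff⟩ :=
      step_exists φ ψ hφpos hψpos hφanti hφ0 j s.1.1 s.1.2 s.2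
    exact ⟨⟨(P', n'), hInv'⟩, hlt, hdiff⟩
  obtain ⟨g, hg0, hg⟩ : ∃ g : ℕ → {p : Polynomial ℝ × ℕ // GoodInv φ p.1 p.2},
      g 0 = ⟨(P0, n0), hInv0⟩ ∧ ∀ j, g (j+1) = (key j (g j)).choose :=
    ⟨fun j => Nat.rec ⟨(P0, n0), hInv0⟩ (fun j s => (key j s).choose) j, rfl, fun _ => rfl⟩
  set Q : ℕ → Polynomial ℝ := fun j => (g j).1.1 with hQdef
  set nn : ℕ → ℕ := fun j => (g j).1.2 with hnndef
  have hInv : ∀ j, GoodInv φ (Q j) (nn j) := fun j => (g j).2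
  have hstep : ∀ j, nn j < nn (j+1) ∧
      ∀ x ∈ Set.Icc (-1:ℝ) 1, |(Q (j+1)).eval x - (Q j).eval x| ≤
        min (ψ (nn j)) (Real.exp (-(nn j:ℝ))) * (1/2)^(j+2) := by
    intro j
    have := (key j (g j)).choose_spec
    rw [← hg j] at this
    exact this
  set M : ℕ → ℝ := fun j => min (ψ (nn j)) (Real.exp (-(nn j:ℝ))) with hMdef
  have hnmono : StrictMono nn := strictMono_nat_of_lt_succ (fun j => (hstep j).1)
  have hnn1 : ∀ j, 1 ≤ nn j := fun j => (hInv j).1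
  have hnn1R : ∀ j, (1:ℝ) ≤ (nn j : ℝ) := fun j => by exact_mod_cast hnn1 j
  have hM1 : ∀ j, M j ≤ 1 := by
    intro j
    refine (min_le_right _ _).trans ?_
    exact Real.exp_le_one_iff.mpr (by linarith [hnn1R j])
  have hMψ : ∀ j, M j ≤ ψ (nn j) := fun j => min_le_left _ _
  have hMexp : ∀ j, M j ≤ Real.exp (-(nn j:ℝ)) := fun j => min_le_right _ _
  have hM0 : ∀ j, 0 ≤ M j := fun j => le_min (hψpos _ (hnn1R j)).le (Real.exp_pos _).le
  have hManti : ∀ i j, i ≤ j → M j ≤ M i := by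
    intro i j hij
    have hle : nn i ≤ nn j := hnmono.monotone hij
    have hleR : ((nn i : ℕ) : ℝ) ≤ ((nn j : ℕ) : ℝ) := by exact_mod_cast hle
    apply min_le_min
    · exact hψanti (mem_Ici.mpr (hnn1R i)) (mem_Ici.mpr (hnn1R j)) hleR
    · exact Real.exp_le_exp.mpr (by linarith)
  set dfun : ℕ → ℝ → ℝ := fun k x => (Q (k+1)).eval x - (Q k).eval x with hdfundef
  have hd : ∀ k, ∀ x ∈ Set.Icc (-1:ℝ) 1, |dfun k x| ≤ M k * (1/2)^(k+2) :=
    fun k => (hstep k).2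
  have hub : ∀ k, ∀ x ∈ Set.Icc (-1:ℝ) 1, ‖dfun k x‖ ≤ (1/2:ℝ)^(k+2) := by
    intro k x hx
    rw [Real.norm_eq_abs]
    refine (hd k x hx).trans ?_
    calc M k * (1/2:ℝ)^(k+2) ≤ 1 * (1/2:ℝ)^(k+2) := by
          apply mul_le_mul_of_nonneg_right (hM1 k) (by positivity)
      _ = (1/2:ℝ)^(k+2) := one_mul _
  have hsumu : Summable (fun k : ℕ => (1/2:ℝ)^(k+2)) := by
    have h := (summable_geometric_of_lt_one (by norm_num : (0:ℝ) ≤ 1/2)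
      (by norm_num : (1/2:ℝ) < 1)).mul_right ((1/2:ℝ)^2)
    have heq : (fun k : ℕ => (1/2:ℝ)^(k+2)) = fun k : ℕ => (1/2:ℝ)^k * (1/2:ℝ)^2 := by
      funext k
      rw [pow_add]
    rw [heq]
    exact h
  set f : ℝ → ℝ := fun x => (Q 0).eval x + ∑' k, dfun k x with hfdef
  have hsumd : ∀ x ∈ Set.Icc (-1:ℝ) 1, Summable (fun k => dfun k x) := by
    intro x hx
    exact Summable.of_norm_bounded hsumu (fun k => hub k x hx)
  -- tail bound
  have htail : ∀ j, ∀ x ∈ Set.Icc (-1:ℝ) 1,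
      |f x - (Q j).eval x| ≤ M j * (1/2:ℝ)^(j+1) := by
    intro j x hx
    have hs := hsumd x hx
    have htel : ∑ k ∈ Finset.range j, dfun k x = (Q j).eval x - (Q 0).eval x :=
      Finset.sum_range_sub (fun i => (Q i).eval x) j
    have hsplit := Summable.sum_add_tsum_nat_add j hs
    have hfx : f x - (Q j).eval x = ∑' k, dfun (k + j) x := by
      rw [hfdef]
      simp only
      rw [← hsplit, htel]
      ring
    rw [hfx]
    have hbnd : ∀ k : ℕ, ‖dfun (k + j) x‖ ≤ M j * (1/2:ℝ)^(k+j+2) := by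
      intro k
      rw [Real.norm_eq_abs]
      refine (hd (k+j) x hx).trans ?_
      apply mul_le_mul_of_nonneg_right (hManti j (k+j) (by omega)) (by positivity)
    have hsumRHS : Summable (fun k : ℕ => M j * (1/2:ℝ)^(k+j+2)) := by
      have : Summable (fun k : ℕ => (1/2:ℝ)^k) :=
        summable_geometric_of_lt_one (by norm_num) (by norm_num)
      have h2 : Summable (fun k : ℕ => (1/2:ℝ)^k * ((1/2:ℝ)^(j+2))) :=
        this.mul_right _
      apply Summable.mul_left
      have heq : (fun k : ℕ => (1/2:ℝ)^(k+j+2)) = fun k : ℕ => (1/2:ℝ)^k * ((1/2:ℝ)^(j+2)) := by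
        funext k
        rw [show k+j+2 = k+(j+2) from by omega, pow_add]
      rw [heq]
      exact h2
    have hsnorm : Summable (fun k : ℕ => ‖dfun (k + j) x‖) :=
      Summable.of_nonneg_of_le (fun k => norm_nonneg _) hbnd hsumRHS
    calc |∑' k, dfun (k + j) x| ≤ ∑' k, ‖dfun (k + j) x‖ := by
          rw [← Real.norm_eq_abs]
          exact norm_tsum_le_tsum_norm hsnorm
      _ ≤ ∑' k, M j * (1/2:ℝ)^(k+j+2) := Summable.tsum_le_tsum hbnd hsnorm hsumRHS
      _ = M j * ∑' k, (1/2:ℝ)^(k+j+2) := tsum_mul_left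
      _ = M j * (1/2:ℝ)^(j+1) := by
          congr 1
          have heq : (fun k : ℕ => (1/2:ℝ)^(k+j+2)) = fun k : ℕ => (1/2:ℝ)^k * ((1/2:ℝ)^(j+2)) := by
            funext k
            rw [show k+j+2 = k+(j+2) from by omega, pow_add]
          rw [heq, tsum_mul_right, tsum_geometric_of_lt_one (by norm_num) (by norm_num)]
          rw [show ((1:ℝ) - 1/2)⁻¹ = 2 by norm_num]
          rw [show (j+2) = (j+1)+1 by omega, pow_succ]
          ring
  refine ⟨f, ?_, ?_, nn, hnmono, fun j => hnn1 j, ?_⟩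
  · -- continuity
    apply ContinuousOn.add
    · exact (Polynomial.continuous_aeval (Q 0)).continuousOn
    · apply continuousOn_tsum (u := fun k => (1/2:ℝ)^(k+2))
      · intro k
        exact (Polynomial.continuous_aeval (Q (k+1))).continuousOn.sub
          (Polynomial.continuous_aeval (Q k)).continuousOn
      · exact hsumu
      · intro k x hx
        exact hub k x hx
  · -- nonzero at 1
    refine ⟨1, by norm_num, ?_⟩
    have h1mem : (1:ℝ) ∈ Set.Icc (-1:ℝ) 1 := by norm_num
    have := htail 0 1 h1mem
    have hQ01 : (Q 0).eval 1 = 1 := by rw [hQdef]; simp only [hg0]; exact hP01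
    rw [hQ01] at this
    have hMb : M 0 * (1/2:ℝ)^(0+1) ≤ 1/2 := by
      calc M 0 * (1/2:ℝ)^(0+1) ≤ 1 * (1/2:ℝ)^(0+1) := by
            apply mul_le_mul_of_nonneg_right (hM1 0) (by positivity)
        _ = 1/2 := by norm_num
    have habs := abs_le.mp (this.trans hMb)
    intro hf0
    rw [hf0] at habs
    linarith [habs.1]
  · -- per level bounds
    intro j
    obtain ⟨h1, h2, h3, h4, h5, h6⟩ := hInv j
    constructor
    · -- En bound
      apply En_le f (nn j) (Q j) h2 (ψ (nn j)) (hψpos _ (hnn1R j)).le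
      intro x hx
      refine (htail j x hx).trans ?_
      calc M j * (1/2:ℝ)^(j+1) ≤ ψ (nn j) * 1 := by
            apply mul_le_mul (hMψ j) (pow_le_one₀ (by norm_num) (by norm_num)) (by positivity)
              (hψpos _ (hnn1R j)).le
        _ = ψ (nn j) := mul_one _
    · -- flatness
      intro x hx
      have hx1 : |x| ≤ 1 := hx.trans h4
      have hxIcc : x ∈ Set.Icc (-1:ℝ) 1 := abs_le.mp hx1
      have hQx := h6 x hx
      have htl := htail j x hxIcc
      have hMb : M j * (1/2:ℝ)^(j+1) ≤ Real.exp (-(nn j:ℝ)) * (1/2) := by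
        apply mul_le_mul (hMexp j) _ (by positivity) (Real.exp_pos _).le
        calc (1/2:ℝ)^(j+1) ≤ (1/2:ℝ)^1 :=
              pow_le_pow_of_le_one (by norm_num) (by norm_num) (by omega)
          _ = 1/2 := pow_one _
      calc |f x| = |(Q j).eval x + (f x - (Q j).eval x)| := by congr 1; ring
        _ ≤ |(Q j).eval x| + |f x - (Q j).eval x| := abs_add_le _ _
        _ ≤ Real.exp (-(nn j:ℝ))/2 + Real.exp (-(nn j:ℝ)) * (1/2) := by
            apply add_le_add hQx (htl.trans hMb)
        _ = Real.exp (-(nn j:ℝ)) := by ring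
end

section
/- Given a decreasing function φ : [1,+∞) → (0,+∞) with lim_{t→∞} φ(t) = 0, there exist a continuous function f on [-1,1] that is not identically zero and a strictly increasing sequence (n_j) of positive integers such that for every j: E_{n_j}(f) ≤ e^{-n_j} and m_f(E*_{n_j}(f)) ≥ 2 φ(n_j). -/
open Filter MeasureTheory Set

/-- E*_n(f) = max(E_n(f), e^{-n}). -/
noncomputable def Estar (f : ℝ → ℝ) (n : ℕ) : ℝ := max (En f n) (Real.exp (-(n : ℝ)))

/-- m_f(t): the Lebesgue measure of {x ∈ [-1,1] : |f x| ≤ t}. -/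
noncomputable def mf (f : ℝ → ℝ) (t : ℝ) : ℝ :=
  (volume {x : ℝ | x ∈ Set.Icc (-1:ℝ) 1 ∧ |f x| ≤ t}).toReal

namespace BLLS


lemma le_exp_self {x : ℝ} : x ≤ Real.exp x :=
  le_trans (by linarith) (Real.add_one_le_exp x)

lemma mul_exp_le (t : ℝ) : Real.exp 1 * t ≤ Real.exp t := by
  have h := Real.add_one_le_exp (t - 1)
  have : t ≤ Real.exp (t-1) := by linarith
  calc Real.exp 1 * t ≤ Real.exp 1 * Real.exp (t-1) := by
        nlinarith [Real.exp_pos (1:ℝ), Real.exp_pos (t-1)]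
    _ = Real.exp t := by rw [← Real.exp_add]; ring_nf

lemma sq_le_exp {x : ℝ} (hx : 0 ≤ x) : x^2 ≤ Real.exp x := by
  have h2 : Real.exp (x/2) ≥ x := by
    have := mul_exp_le (x/2)
    nlinarith [Real.exp_one_gt_d9]
  calc x^2 ≤ (Real.exp (x/2))^2 := by nlinarith [Real.exp_pos (x/2)]
    _ = Real.exp x := by rw [← Real.exp_nat_mul] <;> norm_num [← Real.exp_add]; ring_nf

lemma one_sub_le_exp_neg (t : ℝ) : 1 - t ≤ Real.exp (-t) := by
  have := Real.add_one_le_exp (-t); linarith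

/-- factorial growth: j! ≤ i! * m^(j-i) for i ≤ j ≤ m -/
lemma factorial_le_factorial_mul_pow {i j m : ℕ} (hij : i ≤ j) (hjm : j ≤ m) :
    (Nat.factorial j) ≤ (Nat.factorial i) * m ^ (j - i) := by
  induction j, hij using Nat.le_induction with
  | base => simp
  | succ j hij ih =>
    have hjm' : j ≤ m := le_trans (Nat.le_succ j) hjm
    have : (Nat.factorial (j+1)) = (j+1) * (Nat.factorial j) := rfl
    have h1 : (Nat.factorial j) ≤ (Nat.factorial i) * m ^ (j - i) := ih hjm'
    have h2 : j + 1 ≤ m := hjm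
    calc (Nat.factorial (j+1)) = (j+1) * (Nat.factorial j) := rfl
      _ ≤ m * ((Nat.factorial i) * m ^ (j - i)) := Nat.mul_le_mul h2 h1
      _ = (Nat.factorial i) * (m * m ^ (j - i)) := by ring
      _ = (Nat.factorial i) * m ^ (j + 1 - i) := by
          have hh : j + 1 - i = (j - i) + 1 := by omega
          rw [hh, pow_succ]; ring

/-- s^s ≤ s! * e^s -/
lemma pow_self_le_factorial_mul_exp (s : ℕ) : (s:ℝ)^s ≤ (Nat.factorial s) * Real.exp s := by
  induction s with
  | zero => simp
  | succ s ih =>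
    rcases Nat.eq_zero_or_pos s with hs | hs
    · subst hs; simpa using Real.one_le_exp (by norm_num : (0:ℝ) ≤ 1)
    have hsp : (0:ℝ) < s := by exact_mod_cast hs
    have key : ((s:ℝ)+1)^s ≤ Real.exp 1 * (s:ℝ)^s := by
      have h1 : ((s:ℝ)+1) ≤ (s:ℝ) * Real.exp (1/(s:ℝ)) := by
        have := Real.add_one_le_exp (1/(s:ℝ))
        calc ((s:ℝ)+1) = (s:ℝ) * (1/(s:ℝ) + 1) := by field_simp; ring
          _ ≤ (s:ℝ) * Real.exp (1/(s:ℝ)) := by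
              apply mul_le_mul_of_nonneg_left this (le_of_lt hsp)
      calc ((s:ℝ)+1)^s ≤ ((s:ℝ) * Real.exp (1/(s:ℝ)))^s := by
            apply pow_le_pow_left₀ (by positivity) h1
        _ = (s:ℝ)^s * (Real.exp (1/(s:ℝ)))^s := mul_pow _ _ _
        _ = (s:ℝ)^s * Real.exp 1 := by
            rw [← Real.exp_nat_mul]
            congr 2
            field_simp
        _ = Real.exp 1 * (s:ℝ)^s := by ring
    have hps : ((s:ℕ):ℝ) + 1 = ((s+1:ℕ):ℝ) := by push_cast; ring
    calc ((s+1:ℕ):ℝ)^(s+1) = ((s:ℝ)+1) * ((s:ℝ)+1)^s := by rw [← hps]; ring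
      _ ≤ ((s:ℝ)+1) * (Real.exp 1 * (s:ℝ)^s) := by
          apply mul_le_mul_of_nonneg_left key (by positivity)
      _ ≤ ((s:ℝ)+1) * (Real.exp 1 * ((Nat.factorial s) * Real.exp s)) := by
          have : Real.exp 1 * (s:ℝ)^s ≤ Real.exp 1 * ((Nat.factorial s) * Real.exp s) :=
            mul_le_mul_of_nonneg_left ih (le_of_lt (Real.exp_pos 1))
          apply mul_le_mul_of_nonneg_left this (by positivity)
      _ = ((s+1:ℕ):ℝ) * (Nat.factorial s) * Real.exp (s+1) := by
          rw [Real.exp_add]; push_cast; ring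
      _ = ((Nat.factorial (s+1)) : ℝ) * Real.exp (((s+1:ℕ)):ℝ) := by
          rw [Nat.factorial_succ]; push_cast; ring_nf

/-- choose bound: C(m,i) ≤ m^i / i! in ℝ -/
lemma choose_le_pow_div_factorial (m i : ℕ) : ((m.choose i : ℕ):ℝ) ≤ (m:ℝ)^i / (Nat.factorial i) := by
  rw [le_div_iff₀ (by positivity : (0:ℝ) < ((Nat.factorial i) : ℝ))]
  have h : (Nat.factorial i) * m.choose i = m.descFactorial i := (Nat.descFactorial_eq_factorial_mul_choose m i).symm
  have h2 : m.descFactorial i ≤ m ^ i := Nat.descFactorial_le_pow m i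
  calc ((m.choose i : ℕ):ℝ) * (Nat.factorial i) = (((Nat.factorial i) * m.choose i : ℕ) : ℝ) := by push_cast; ring
    _ = ((m.descFactorial i : ℕ):ℝ) := by rw [h]
    _ ≤ ((m^i : ℕ):ℝ) := by exact_mod_cast h2
    _ = (m:ℝ)^i := by push_cast; ring



/-- the Bernstein-type gadget function -/
noncomputable def gfun (s m : ℕ) (u : ℝ) : ℝ :=
  ∑ i ∈ Finset.Ico s (m+1), (m.choose i : ℝ) * u^i * (1-u)^(m-i)

variable {s m : ℕ} {u : ℝ}

lemma full_sum (m : ℕ) (u : ℝ) :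
    ∑ i ∈ Finset.range (m+1), (m.choose i : ℝ) * u^i * (1-u)^(m-i) = 1 := by
  have h := add_pow u (1-u) m
  have h2 : u + (1-u) = 1 := by ring
  rw [h2, one_pow] at h
  calc ∑ i ∈ Finset.range (m+1), (m.choose i : ℝ) * u^i * (1-u)^(m-i)
      = ∑ i ∈ Finset.range (m+1), u^i * (1-u)^(m-i) * (m.choose i : ℝ) :=
        Finset.sum_congr rfl (fun i _ => by ring)
    _ = 1 := h.symm

lemma gfun_nonneg (hu0 : 0 ≤ u) (hu1 : u ≤ 1) : 0 ≤ gfun s m u := by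
  apply Finset.sum_nonneg
  intro i _
  have : (0:ℝ) ≤ 1 - u := by linarith
  positivity

lemma split_sum (hsm : s ≤ m) (u : ℝ) :
    (∑ i ∈ Finset.range s, (m.choose i : ℝ) * u^i * (1-u)^(m-i)) + gfun s m u = 1 := by
  have h := Finset.sum_range_add_sum_Ico (f := fun i => (m.choose i : ℝ) * u^i * (1-u)^(m-i))
    (show s ≤ m+1 by omega)
  simp only [gfun]
  rw [h, full_sum]

lemma gfun_le_one (hsm : s ≤ m) (hu0 : 0 ≤ u) (hu1 : u ≤ 1) : gfun s m u ≤ 1 := by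
  have h := split_sum hsm u
  have h2 : 0 ≤ ∑ i ∈ Finset.range s, (m.choose i : ℝ) * u^i * (1-u)^(m-i) := by
    apply Finset.sum_nonneg; intro i _
    have : (0:ℝ) ≤ 1 - u := by linarith
    positivity
  linarith

lemma gfun_at_one (hsm : s ≤ m) : gfun s m 1 = 1 := by
  rw [gfun]
  rw [Finset.sum_eq_single_of_mem m (by simp [Finset.mem_Ico]; omega)]
  · simp
  · intro i hi hne
    have him : i < m := by simp [Finset.mem_Ico] at hi; omega
    have : (1:ℝ) - 1 = 0 := by ring
    rw [this, zero_pow (by omega)]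
    ring

lemma gfun_flat (hsm : s ≤ m) (hu0 : 0 ≤ u) (hu1 : u ≤ 1) :
    gfun s m u ≤ u^s * 2^m := by
  have step : ∀ i ∈ Finset.Ico s (m+1), (m.choose i : ℝ) * u^i * (1-u)^(m-i)
      ≤ (m.choose i : ℝ) * u^s := by
    intro i hi
    simp [Finset.mem_Ico] at hi
    have h1 : u^i ≤ u^s := pow_le_pow_of_le_one hu0 hu1 hi.1
    have h2 : (1-u)^(m-i) ≤ 1 := pow_le_one₀ (by linarith) (by linarith)
    have hc : (0:ℝ) ≤ (m.choose i : ℝ) := by positivity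
    calc (m.choose i : ℝ) * u^i * (1-u)^(m-i) ≤ (m.choose i : ℝ) * u^i * 1 := by
          apply mul_le_mul_of_nonneg_left h2
          positivity
      _ = (m.choose i : ℝ) * u^i := by ring
      _ ≤ (m.choose i : ℝ) * u^s := mul_le_mul_of_nonneg_left h1 hc
  calc gfun s m u ≤ ∑ i ∈ Finset.Ico s (m+1), (m.choose i : ℝ) * u^s :=
        Finset.sum_le_sum step
    _ = (∑ i ∈ Finset.Ico s (m+1), (m.choose i : ℝ)) * u^s := by
        rw [Finset.sum_mul]
    _ ≤ (∑ i ∈ Finset.range (m+1), (m.choose i : ℝ)) * u^s := by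
        apply mul_le_mul_of_nonneg_right _ (by positivity)
        rw [Finset.range_eq_Ico]
        apply Finset.sum_le_sum_of_subset_of_nonneg
        · apply Finset.Ico_subset_Ico (Nat.zero_le s) le_rfl
        · intro i _ _; positivity
    _ = 2^m * u^s := by
        norm_cast
        rw [Nat.sum_range_choose]
    _ = u^s * 2^m := by ring

/-- left precision bound -/
lemma one_sub_gfun_le (hs : 1 ≤ s) (hsm : s ≤ m) (hu0 : 0 ≤ u) (hu1 : u ≤ 1) :
    1 - gfun s m u ≤ (s:ℝ) * ((m:ℝ)/(s:ℝ) * Real.exp 1)^s * (1-u)^(m-s) := by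
  have h := split_sum hsm u
  have hsum : ∑ i ∈ Finset.range s, (m.choose i : ℝ) * u^i * (1-u)^(m-i)
      ≤ (∑ i ∈ Finset.range s, (m:ℝ)^i / (Nat.factorial i)) * (1-u)^(m-s) := by
    rw [Finset.sum_mul]
    apply Finset.sum_le_sum
    intro i hi
    simp [Finset.mem_range] at hi
    have h1 : (m.choose i : ℝ) ≤ (m:ℝ)^i / (Nat.factorial i) := choose_le_pow_div_factorial m i
    have h2 : u^i ≤ 1 := pow_le_one₀ hu0 hu1
    have h3 : (1-u)^(m-i) ≤ (1-u)^(m-s) := pow_le_pow_of_le_one (by linarith) (by linarith) (by omega)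
    have hc : (0:ℝ) ≤ (m.choose i : ℝ) := by positivity
    have h1u : (0:ℝ) ≤ 1 - u := by linarith
    calc (m.choose i : ℝ) * u^i * (1-u)^(m-i)
        ≤ (m.choose i : ℝ) * 1 * (1-u)^(m-s) := by
          apply mul_le_mul (by apply mul_le_mul_of_nonneg_left h2 hc) h3 (by positivity)
          positivity
      _ = (m.choose i : ℝ) * (1-u)^(m-s) := by ring
      _ ≤ ((m:ℝ)^i / (Nat.factorial i)) * (1-u)^(m-s) := by
          apply mul_le_mul_of_nonneg_right h1 (by positivity)
  have hterm : ∀ i ∈ Finset.range s, (m:ℝ)^i / (Nat.factorial i)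
      ≤ (m:ℝ)^(s-1) / (Nat.factorial (s-1)) := by
    intro i hi
    simp [Finset.mem_range] at hi
    have hi' : i ≤ s - 1 := by omega
    have hfact : (Nat.factorial (s-1)) ≤ (Nat.factorial i) * m ^ (s-1-i) :=
      factorial_le_factorial_mul_pow hi' (by omega)
    rw [div_le_div_iff₀ (by positivity) (by positivity)]
    have hfr : ((Nat.factorial (s-1)):ℝ) ≤ (Nat.factorial i) * (m:ℝ) ^ (s-1-i) := by
      exact_mod_cast hfact
    calc (m:ℝ)^i * (Nat.factorial (s-1)) ≤ (m:ℝ)^i * ((Nat.factorial i) * (m:ℝ)^(s-1-i)) :=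
          mul_le_mul_of_nonneg_left hfr (by positivity)
      _ = (m:ℝ)^(i + (s-1-i)) * (Nat.factorial i) := by rw [pow_add]; ring
      _ = (m:ℝ)^(s-1) * (Nat.factorial i) := by congr 2; omega
  have hsum2 : (∑ i ∈ Finset.range s, (m:ℝ)^i / (Nat.factorial i))
      ≤ (s:ℝ) * ((m:ℝ)^(s-1) / (Nat.factorial (s-1))) := by
    calc (∑ i ∈ Finset.range s, (m:ℝ)^i / (Nat.factorial i))
        ≤ ∑ _i ∈ Finset.range s, (m:ℝ)^(s-1) / (Nat.factorial (s-1)) :=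
          Finset.sum_le_sum hterm
      _ = (s:ℝ) * ((m:ℝ)^(s-1) / (Nat.factorial (s-1))) := by
          rw [Finset.sum_const, Finset.card_range]; simp [nsmul_eq_mul]
  -- m^(s-1)/(s-1)! ≤ (m/s * e)^s / s  ... i.e. s * (...) ≤ s * (m/s e)^s
  have hkey : (s:ℝ) * ((m:ℝ)^(s-1) / (Nat.factorial (s-1))) ≤ (s:ℝ) * ((m:ℝ)/(s:ℝ) * Real.exp 1)^s := by
    apply mul_le_mul_of_nonneg_left _ (by positivity)
    -- m^(s-1)/(s-1)! = (m^s/s!) * (s/m)  ≤ m^s/s!  (s ≤ m)... careful m ≥ s ≥ 1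
    have hm1 : (1:ℕ) ≤ m := le_trans hs hsm
    have hmr : (0:ℝ) < (m:ℝ) := by exact_mod_cast hm1
    have hsr : (0:ℝ) < (s:ℝ) := by exact_mod_cast hs
    have e1 : (m:ℝ)^(s-1) / (Nat.factorial (s-1)) ≤ (m:ℝ)^s / (Nat.factorial s) := by
      -- m^(s-1) * s! ≤ m^s * (s-1)!  ⟺ s ≤ m (s! = s (s-1)!)
      rw [div_le_div_iff₀ (by positivity) (by positivity)]
      obtain ⟨t, rfl⟩ : ∃ t, s = t+1 := ⟨s-1, by omega⟩
      simp only [Nat.add_sub_cancel]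
      rw [pow_succ, Nat.factorial_succ]
      have hms : ((t:ℝ)+1) ≤ (m:ℝ) := by exact_mod_cast hsm
      push_cast
      nlinarith [mul_le_mul_of_nonneg_right hms
        (show (0:ℝ) ≤ (m:ℝ)^t * ((Nat.factorial t : ℕ):ℝ) by positivity)]
    have e2 : (m:ℝ)^s / (Nat.factorial s) ≤ ((m:ℝ)/(s:ℝ) * Real.exp 1)^s := by
      -- m^s / s! = (m/s)^s * (s^s / s!) ≤ (m/s)^s e^s
      have hss : (s:ℝ)^s ≤ (Nat.factorial s) * Real.exp s := pow_self_le_factorial_mul_exp s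
      rw [div_le_iff₀ (by positivity)]
      have expand : ((m:ℝ)/(s:ℝ) * Real.exp 1)^s = (m:ℝ)^s / (s:ℝ)^s * Real.exp s := by
        rw [mul_pow, div_pow, ← Real.exp_nat_mul]; norm_num
      rw [expand]
      rw [div_mul_eq_mul_div, div_mul_eq_mul_div, le_div_iff₀ (by positivity)]
      calc (m:ℝ)^s * (s:ℝ)^s ≤ (m:ℝ)^s * ((Nat.factorial s) * Real.exp s) :=
            mul_le_mul_of_nonneg_left hss (by positivity)
        _ = (m:ℝ)^s * Real.exp s * (Nat.factorial s) := by ring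
    exact le_trans e1 e2
  have h1u : (0:ℝ) ≤ 1 - u := by linarith
  have hfin : 1 - gfun s m u = ∑ i ∈ Finset.range s, (m.choose i : ℝ) * u^i * (1-u)^(m-i) := by
    linarith
  rw [hfin]
  calc (∑ i ∈ Finset.range s, (m.choose i : ℝ) * u^i * (1-u)^(m-i))
      ≤ (∑ i ∈ Finset.range s, (m:ℝ)^i / (Nat.factorial i)) * (1-u)^(m-s) := hsum
    _ ≤ ((s:ℝ) * ((m:ℝ)^(s-1) / (Nat.factorial (s-1)))) * (1-u)^(m-s) := by
        apply mul_le_mul_of_nonneg_right hsum2 (by positivity)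
    _ ≤ ((s:ℝ) * ((m:ℝ)/(s:ℝ) * Real.exp 1)^s) * (1-u)^(m-s) := by
        apply mul_le_mul_of_nonneg_right hkey (by positivity)



noncomputable def gpoly (s m : ℕ) : Polynomial ℝ :=
  ∑ i ∈ Finset.Ico s (m+1), Polynomial.C (m.choose i : ℝ) * Polynomial.X^i * (1 - Polynomial.X)^(m-i)

lemma gpoly_eval (s m : ℕ) (u : ℝ) : (gpoly s m).eval u = gfun s m u := by
  simp [gpoly, gfun, Polynomial.eval_finset_sum]

lemma gpoly_natDegree_le (s m : ℕ) : (gpoly s m).natDegree ≤ m := by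
  apply Polynomial.natDegree_sum_le_of_forall_le
  intro i hi
  simp only [Finset.mem_Ico] at hi
  have h1 : ((1:Polynomial ℝ) - Polynomial.X).natDegree ≤ 1 := by
    refine le_trans (Polynomial.natDegree_sub_le _ _) ?_
    simp
  have hA : (Polynomial.C (m.choose i : ℝ) * Polynomial.X^i).natDegree ≤ i := by
    refine le_trans Polynomial.natDegree_mul_le ?_
    simp [Polynomial.natDegree_X_pow]
  have hB : (((1:Polynomial ℝ) - Polynomial.X)^(m-i)).natDegree ≤ m - i := by
    refine le_trans Polynomial.natDegree_pow_le ?_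
    calc (m-i) * ((1:Polynomial ℝ) - Polynomial.X).natDegree ≤ (m-i)*1 :=
          Nat.mul_le_mul_left _ h1
      _ = m - i := by ring
  refine le_trans Polynomial.natDegree_mul_le ?_
  omega

noncomputable def lpoly : Polynomial ℝ := Polynomial.C (1/2) - Polynomial.C (1/2) * Polynomial.X

lemma lpoly_eval (x : ℝ) : lpoly.eval x = (1-x)/2 := by
  simp [lpoly]; ring

lemma lpoly_natDegree_le : lpoly.natDegree ≤ 1 := by
  refine le_trans (Polynomial.natDegree_sub_le _ _) ?_
  simp only [sup_le_iff]
  constructor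
  · simp
  · refine le_trans Polynomial.natDegree_mul_le ?_
    simp

noncomputable def stepPoly (s m : ℕ) : Polynomial ℝ := (gpoly s m).comp lpoly

lemma stepPoly_eval (s m : ℕ) (x : ℝ) : (stepPoly s m).eval x = gfun s m ((1-x)/2) := by
  rw [stepPoly, Polynomial.eval_comp, lpoly_eval, gpoly_eval]

lemma stepPoly_natDegree_le (s m : ℕ) : (stepPoly s m).natDegree ≤ m := by
  refine le_trans Polynomial.natDegree_comp_le ?_
  calc (gpoly s m).natDegree * lpoly.natDegree ≤ m * 1 :=
    Nat.mul_le_mul (gpoly_natDegree_le s m) lpoly_natDegree_le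
  _ = m := by ring



def Good (φ : ℝ → ℝ) (n : ℕ) (P : Polynomial ℝ) : Prop :=
  1 ≤ n ∧ φ n ≤ Real.exp (-1) ∧ P.natDegree ≤ n ∧
  (∀ x ∈ Set.Icc (-1:ℝ) 1, P.eval x ∈ Set.Icc (0:ℝ) 1) ∧ P.eval (-1) = 1

def Flat (φ : ℝ → ℝ) (n : ℕ) (P : Polynomial ℝ) : Prop :=
  ∀ x ∈ Set.Icc (1 - 2*φ n) 1, |P.eval x| ≤ Real.exp (-(n:ℝ))/4

def DiffB (n : ℕ) (P P' : Polynomial ℝ) : Prop :=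
  ∀ x ∈ Set.Icc (-1:ℝ) 1, |P'.eval x - P.eval x| ≤ Real.exp (-(n:ℝ))/4

lemma exp_two_ge_four : (4:ℝ) ≤ Real.exp 2 := by
  have h2e : (2:ℝ) ≤ Real.exp 1 := by
    have := Real.exp_one_gt_d9; nlinarith
  have h2 : (Real.exp 1)^2 = Real.exp 2 := by
    rw [← Real.exp_nat_mul]; norm_num
  nlinarith

lemma exp_neg_two_le : Real.exp (-2:ℝ) ≤ 1/4 := by
  rw [Real.exp_neg, inv_le_comm₀ (Real.exp_pos 2) (by norm_num)]
  linarith [exp_two_ge_four]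

lemma exp_neg_four_le : Real.exp (-4:ℝ) ≤ 1/4 := by
  calc Real.exp (-4:ℝ) ≤ Real.exp (-2:ℝ) := by
        apply Real.exp_le_exp.mpr; norm_num
    _ ≤ 1/4 := exp_neg_two_le

set_option maxHeartbeats 2000000 in
lemma step_ex (φ : ℝ → ℝ) (hφpos : ∀ x, 1 ≤ x → 0 < φ x)
    (hφ0 : Tendsto φ atTop (nhds 0)) {n : ℕ} {P : Polynomial ℝ} (h : Good φ n P) :
    ∃ n' P', Good φ n' P' ∧ n < n' ∧ Flat φ n' P' ∧ (Flat φ n P → DiffB n P P') := by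
  obtain ⟨hn1, hφe, hdeg, hbd, hone⟩ := h
  have hφn_pos : 0 < φ n := hφpos n (by exact_mod_cast hn1)
  set a : ℝ := (φ n)⁻¹ with ha
  have hapos : 0 < a := by positivity
  have hφa : φ n = a⁻¹ := by rw [ha, inv_inv]
  have ha1 : 1 ≤ a := by
    have h1 : φ n ≤ 1 := le_trans hφe (by rw [Real.exp_le_one_iff]; norm_num)
    rw [ha, le_inv_comm₀ one_pos hφn_pos]
    simpa using h1
  set M : ℕ := ⌈Real.exp 10 * a^2⌉₊ with hMdef
  have hM_lb : Real.exp 10 * a^2 ≤ (M:ℝ) := Nat.le_ceil _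
  have hM_ub : (M:ℝ) ≤ Real.exp 10 * a^2 + 1 := le_of_lt (Nat.ceil_lt_add_one (by positivity))
  have hM1 : 1 ≤ M := by
    have h2 : (1:ℝ) ≤ Real.exp 10 * a^2 := by
      have h10 : (1:ℝ) ≤ Real.exp 10 := Real.one_le_exp (by norm_num)
      nlinarith
    have h3 : (1:ℝ) ≤ (M:ℝ) := le_trans h2 hM_lb
    exact_mod_cast h3
  have hM1r : (1:ℝ) ≤ (M:ℝ) := by exact_mod_cast hM1
  clear_value M
  -- choose N
  have hsmall : ∀ᶠ t in atTop, φ t < Real.exp (-(16*(M:ℝ))) :=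
    hφ0.eventually_lt_const (by positivity)
  obtain ⟨R, hR⟩ := Filter.eventually_atTop.mp hsmall
  obtain ⟨N, hNa, hNb, hNc, hN1⟩ : ∃ N : ℕ, (2*n + 4*M + 10 ≤ N) ∧ (16*M*(n+4) ≤ N)
      ∧ (R ≤ (N:ℝ)) ∧ 1 ≤ N := by
    refine ⟨max (max (2*n + 4*M + 10) (16*M*(n+4))) ⌈R⌉₊, ?_, ?_, ?_, ?_⟩
    · exact le_trans (le_max_left _ _) (le_max_left _ _)
    · exact le_trans (le_max_right _ _) (le_max_left _ _)
    · calc R ≤ (⌈R⌉₊ : ℝ) := Nat.le_ceil R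
        _ ≤ _ := by exact_mod_cast le_max_right _ _
    · omega
  have hφN : φ N < Real.exp (-(16*(M:ℝ))) := hR N hNc
  have hφN_pos : 0 < φ N := hφpos N (by exact_mod_cast hN1)
  -- choose s
  obtain ⟨s, hs1, hsn, hsR, hsdeg⟩ : ∃ s : ℕ, 1 ≤ s ∧ n + 4 ≤ s
      ∧ ((N:ℝ)+2)/(8*(M:ℝ)) < (s:ℝ) ∧ n + M * s ≤ N := by
    refine ⟨(2*(N+2))/(16*M) + 1, Nat.succ_le_succ (Nat.zero_le _), ?_, ?_, ?_⟩
    · have h1 : 16*M*(2*(n+4)) ≤ 2*(N+2) := by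
        calc 16*M*(2*(n+4)) = 2*(16*M*(n+4)) := by ring
          _ ≤ 2*N := Nat.mul_le_mul_left 2 hNb
          _ ≤ 2*(N+2) := by omega
      have h2 : (16*M*(2*(n+4)))/(16*M) ≤ (2*(N+2))/(16*M) := Nat.div_le_div_right h1
      rw [Nat.mul_div_cancel_left _ (by positivity)] at h2
      calc n+4 ≤ 2*(n+4) := by omega
        _ ≤ (2*(N+2))/(16*M) := h2
        _ ≤ (2*(N+2))/(16*M) + 1 := Nat.le_succ _
    · have h1 : 2*(N+2) < (2*(N+2))/(16*M) * (16*M) + 16*M :=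
        Nat.lt_div_mul_add (by positivity)
      have h1r : 2*((N:ℝ)+2) <
          (((2*(N+2))/(16*M) : ℕ):ℝ) * (16*(M:ℝ)) + 16*(M:ℝ) := by exact_mod_cast h1
      rw [div_lt_iff₀ (by positivity)]
      push_cast
      nlinarith
    · rw [Nat.mul_add, Nat.mul_one]
      have hq : 16*(M * ((2*(N+2))/(16*M))) ≤ 2*(N+2) := by
        have h := Nat.div_mul_le_self (2*(N+2)) (16*M)
        calc 16*(M * ((2*(N+2))/(16*M))) = ((2*(N+2))/(16*M)) * (16*M) := by ring
          _ ≤ 2*(N+2) := h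
      have hgen : ∀ t : ℕ, 16*t ≤ 2*(N+2) → n + (t + M) ≤ N := by
        intro t ht; omega
      exact hgen _ hq
  set m : ℕ := M * s with hmdef
  have hsm : s ≤ m := by
    calc s = 1 * s := (one_mul s).symm
      _ ≤ M * s := Nat.mul_le_mul_right s hM1
  have hm1 : 1 ≤ m := le_trans hs1 hsm
  have hdegN : n + m ≤ N := hsdeg
  -- eval formula and u-range helpers
  have heval : ∀ x : ℝ, (P * stepPoly s m).eval x = P.eval x * gfun s m ((1-x)/2) := by
    intro x; rw [Polynomial.eval_mul, stepPoly_eval]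
  have hu01 : ∀ x : ℝ, x ∈ Set.Icc (-1:ℝ) 1 → (0 ≤ (1-x)/2 ∧ (1-x)/2 ≤ 1) := by
    intro x hx
    simp only [Set.mem_Icc] at hx
    constructor <;> nlinarith [hx.1, hx.2]
  have hsr1 : (1:ℝ) ≤ (s:ℝ) := by exact_mod_cast hs1
  have hmsM : (m:ℝ)/(s:ℝ) = (M:ℝ) := by
    rw [hmdef]; push_cast; field_simp
  have h2e : (2:ℝ) ≤ Real.exp 1 := by
    have := Real.exp_one_gt_d9; nlinarith
  have hsnr : (n:ℝ) + 4 ≤ (s:ℝ) := by exact_mod_cast hsn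
  -- flatness of the new polynomial
  have hflatN : ∀ x ∈ Set.Icc (1 - 2*φ N) 1, |(P * stepPoly s m).eval x| ≤ Real.exp (-(N:ℝ))/4 := by
    intro x hx
    simp only [Set.mem_Icc] at hx
    have hφN1 : φ N < 1 := lt_of_lt_of_le hφN (by
      rw [Real.exp_le_one_iff]
      nlinarith)
    have hxIcc : x ∈ Set.Icc (-1:ℝ) 1 := Set.mem_Icc.mpr ⟨by linarith [hx.1], hx.2⟩
    obtain ⟨hu0, hu1⟩ := hu01 x hxIcc
    set u : ℝ := (1-x)/2 with hu
    have huφ : u ≤ φ N := by rw [hu]; linarith [hx.1]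
    have hP := hbd x hxIcc
    simp only [Set.mem_Icc] at hP
    rw [heval]
    have hg0 : 0 ≤ gfun s m u := gfun_nonneg hu0 hu1
    have habs : |P.eval x * gfun s m u| = P.eval x * gfun s m u :=
      abs_of_nonneg (mul_nonneg hP.1 hg0)
    rw [habs]
    have hb1 : P.eval x * gfun s m u ≤ gfun s m u := by nlinarith [hP.1, hP.2, hg0]
    have hb2 : gfun s m u ≤ u^s * 2^m := gfun_flat hsm hu0 hu1
    have hb3 : u^s * 2^m ≤ (φ N * 2^M)^s := by
      have h2m : (2:ℝ)^m = ((2:ℝ)^M)^s := by rw [hmdef, pow_mul]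
      rw [h2m, ← mul_pow]
      exact pow_le_pow_left₀ (by positivity)
        (mul_le_mul_of_nonneg_right huφ (by positivity)) s
    have hb4 : (φ N * 2^M)^s ≤ (Real.exp (-(15*(M:ℝ))))^s := by
      apply pow_le_pow_left₀ (by positivity)
      have h2M : (2:ℝ)^M ≤ Real.exp M := by
        calc (2:ℝ)^M ≤ (Real.exp 1)^M := pow_le_pow_left₀ (by norm_num) h2e M
          _ = Real.exp M := by rw [← Real.exp_nat_mul]; ring_nf
      calc φ N * 2^M ≤ Real.exp (-(16*(M:ℝ))) * Real.exp M := by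
            apply mul_le_mul (le_of_lt hφN) h2M (by positivity) (by positivity)
        _ = Real.exp (-(16*(M:ℝ)) + M) := (Real.exp_add _ _).symm
        _ = Real.exp (-(15*(M:ℝ))) := by ring_nf
    have hb5 : (Real.exp (-(15*(M:ℝ))))^s ≤ Real.exp (-((N:ℝ)+2)) := by
      rw [← Real.exp_nat_mul]
      apply Real.exp_le_exp.mpr
      have h15 : ((N:ℝ)+2) ≤ 15*(M:ℝ)*(s:ℝ) := by
        have h := hsR
        rw [div_lt_iff₀ (by positivity)] at h
        nlinarith
      nlinarith
    have hb6 : Real.exp (-((N:ℝ)+2)) ≤ Real.exp (-(N:ℝ))/4 := by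
      rw [show -((N:ℝ)+2) = -(N:ℝ) + (-2) by ring, Real.exp_add]
      nlinarith [Real.exp_pos (-(N:ℝ)), exp_neg_two_le]
    linarith
  refine ⟨N, P * stepPoly s m, ⟨by omega, ?_, ?_, ?_, ?_⟩, by omega, hflatN, ?_⟩
  · calc φ N ≤ Real.exp (-(16*(M:ℝ))) := le_of_lt hφN
      _ ≤ Real.exp (-1) := by
          apply Real.exp_le_exp.mpr
          nlinarith
  · calc (P * stepPoly s m).natDegree ≤ P.natDegree + (stepPoly s m).natDegree :=
          Polynomial.natDegree_mul_le
      _ ≤ N := by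
          have := stepPoly_natDegree_le s m
          omega
  · intro x hx
    obtain ⟨hu0, hu1⟩ := hu01 x hx
    have hP := hbd x hx
    simp only [Set.mem_Icc] at hP ⊢
    rw [heval]
    refine ⟨mul_nonneg hP.1 (gfun_nonneg hu0 hu1), ?_⟩
    calc P.eval x * gfun s m ((1-x)/2) ≤ 1 * 1 := by
          apply mul_le_mul hP.2 (gfun_le_one hsm hu0 hu1) (gfun_nonneg hu0 hu1) (by norm_num)
      _ = 1 := by norm_num
  · rw [heval, hone]
    norm_num
    exact gfun_at_one hsm
  -- the conditional diff bound
  · intro hFlat x hx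
    obtain ⟨hu0, hu1⟩ := hu01 x hx
    set u : ℝ := (1-x)/2 with hu
    have hP := hbd x hx
    simp only [Set.mem_Icc] at hP
    have hg0 : 0 ≤ gfun s m u := gfun_nonneg hu0 hu1
    have hg1 : gfun s m u ≤ 1 := gfun_le_one hsm hu0 hu1
    have hdiff : |(P * stepPoly s m).eval x - P.eval x| = P.eval x * (1 - gfun s m u) := by
      rw [heval]
      rw [show P.eval x * gfun s m u - P.eval x = -(P.eval x * (1 - gfun s m u)) by ring]
      rw [abs_neg, abs_of_nonneg]
      nlinarith [hP.1, hP.2]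
    rw [hdiff]
    by_cases hxc : 1 - 2*φ n ≤ x
    · have hPx : |P.eval x| ≤ Real.exp (-(n:ℝ))/4 := hFlat x ⟨hxc, (Set.mem_Icc.mp hx).2⟩
      rw [abs_of_nonneg hP.1] at hPx
      nlinarith [hP.1, Real.exp_pos (-(n:ℝ))]
    · push_neg at hxc
      have huφ : φ n ≤ u := by rw [hu]; linarith
      have h1g := one_sub_gfun_le hs1 hsm hu0 hu1
      rw [hmsM] at h1g
      have hcast : ((m - s : ℕ):ℝ) = (s:ℝ)*((M:ℝ)-1) := by
        rw [Nat.cast_sub hsm, hmdef]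
        push_cast; ring
      have hexp1 : (1-u)^(m-s) ≤ Real.exp (-(φ n * ((s:ℝ) * ((M:ℝ)-1)))) := by
        calc (1-u)^(m-s) ≤ (Real.exp (-u))^(m-s) :=
              pow_le_pow_left₀ (by linarith) (one_sub_le_exp_neg u) _
          _ = Real.exp (((m-s:ℕ):ℝ) * (-u)) := (Real.exp_nat_mul _ _).symm
          _ ≤ Real.exp (-(φ n * ((s:ℝ) * ((M:ℝ)-1)))) := by
              apply Real.exp_le_exp.mpr
              rw [hcast]
              have hM1' : (0:ℝ) ≤ (M:ℝ) - 1 := by linarith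
              nlinarith [huφ, hφn_pos.le, hsr1]
      -- κ := M e exp(-φn (M-1)) ≤ exp(-2)
      have hκ : (M:ℝ) * Real.exp 1 * Real.exp (-(φ n * ((M:ℝ)-1))) ≤ Real.exp (-2:ℝ) := by
        have hM15 : 15*a^2 ≤ (M:ℝ) - 1 := by
          have h10 : (16:ℝ) ≤ Real.exp 10 := by
            have h4 : Real.exp 1 ^ 10 = Real.exp 10 := by rw [← Real.exp_nat_mul]; norm_num
            calc (16:ℝ) ≤ 2^10 := by norm_num
              _ ≤ (Real.exp 1)^10 := pow_le_pow_left₀ (by norm_num) h2e 10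
              _ = Real.exp 10 := h4
          nlinarith
        have hφM : 15*a ≤ φ n * ((M:ℝ)-1) := by
          rw [hφa]
          have : a⁻¹ * (15*a^2) = 15*a := by field_simp
          calc 15*a = a⁻¹ * (15*a^2) := this.symm
            _ ≤ a⁻¹ * ((M:ℝ)-1) := by
                apply mul_le_mul_of_nonneg_left hM15 (by positivity)
        have hMb : (M:ℝ) ≤ Real.exp 11 * a^2 := by
          have : Real.exp 10 * a^2 + 1 ≤ Real.exp 11 * a^2 := by
            have he1 : (2:ℝ) ≤ Real.exp 1 := h2e
            have hmul : Real.exp 11 = Real.exp 10 * Real.exp 1 := by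
              rw [← Real.exp_add]; norm_num
            have hpos10 : (16:ℝ) ≤ Real.exp 10 := by
              have h4 : Real.exp 1 ^ 10 = Real.exp 10 := by rw [← Real.exp_nat_mul]; norm_num
              calc (16:ℝ) ≤ 2^10 := by norm_num
                _ ≤ (Real.exp 1)^10 := pow_le_pow_left₀ (by norm_num) h2e 10
                _ = Real.exp 10 := h4
            nlinarith
          linarith [hM_ub]
        have ha2exp : a^2 ≤ Real.exp a := sq_le_exp hapos.le
        calc (M:ℝ) * Real.exp 1 * Real.exp (-(φ n * ((M:ℝ)-1)))
            ≤ (Real.exp 11 * a^2) * Real.exp 1 * Real.exp (-(15*a)) := by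
              apply mul_le_mul
              · apply mul_le_mul_of_nonneg_right hMb (Real.exp_pos 1).le
              · exact Real.exp_le_exp.mpr (by linarith)
              · positivity
              · positivity
          _ ≤ (Real.exp 11 * Real.exp a) * Real.exp 1 * Real.exp (-(15*a)) := by
              have := Real.exp_pos 1
              have := Real.exp_pos (-(15*a))
              apply mul_le_mul_of_nonneg_right _ (Real.exp_pos (-(15*a))).le
              apply mul_le_mul_of_nonneg_right _ (Real.exp_pos 1).le
              apply mul_le_mul_of_nonneg_left ha2exp (Real.exp_pos 11).le
          _ = Real.exp (12 + a - 15*a) := by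
              rw [← Real.exp_add, ← Real.exp_add, ← Real.exp_add]; ring_nf
          _ ≤ Real.exp (-2:ℝ) := Real.exp_le_exp.mpr (by nlinarith)
      -- combine
      have hcomb : 1 - gfun s m u ≤ (s:ℝ) * (Real.exp (-2:ℝ))^s := by
        have e3 : Real.exp (-(φ n * ((s:ℝ) * ((M:ℝ)-1)))) =
            (Real.exp (-(φ n * ((M:ℝ)-1))))^s := by
          rw [← Real.exp_nat_mul]; ring_nf
        have e4 : ((M:ℝ) * Real.exp 1)^s * (Real.exp (-(φ n * ((M:ℝ)-1))))^s
            = ((M:ℝ) * Real.exp 1 * Real.exp (-(φ n * ((M:ℝ)-1))))^s := (mul_pow _ _ _).symm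
        calc 1 - gfun s m u ≤ (s:ℝ) * ((M:ℝ) * Real.exp 1)^s * (1-u)^(m-s) := h1g
          _ ≤ (s:ℝ) * ((M:ℝ) * Real.exp 1)^s * Real.exp (-(φ n * ((s:ℝ) * ((M:ℝ)-1)))) := by
              apply mul_le_mul_of_nonneg_left hexp1 (by positivity)
          _ = (s:ℝ) * (((M:ℝ) * Real.exp 1)^s * (Real.exp (-(φ n * ((M:ℝ)-1))))^s) := by
              rw [e3]; ring
          _ = (s:ℝ) * ((M:ℝ) * Real.exp 1 * Real.exp (-(φ n * ((M:ℝ)-1))))^s := by rw [e4]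
          _ ≤ (s:ℝ) * (Real.exp (-2:ℝ))^s := by
              apply mul_le_mul_of_nonneg_left _ (by positivity)
              apply pow_le_pow_left₀ (by positivity) hκ
      have hfin : (s:ℝ) * (Real.exp (-2:ℝ))^s ≤ Real.exp (-(n:ℝ))/4 := by
        have e5 : (Real.exp (-2:ℝ))^s = Real.exp (-(s:ℝ)) * Real.exp (-(s:ℝ)) := by
          rw [← Real.exp_nat_mul, ← Real.exp_add]
          congr 1; ring
        have e6 : (s:ℝ) * Real.exp (-(s:ℝ)) ≤ 1 := by
          have := le_exp_self (x := (s:ℝ))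
          rw [Real.exp_neg]
          rw [mul_inv_le_iff₀ (Real.exp_pos _)]
          linarith
        have e7 : Real.exp (-(s:ℝ)) ≤ Real.exp (-(n:ℝ)) * Real.exp (-4:ℝ) := by
          rw [← Real.exp_add]
          apply Real.exp_le_exp.mpr
          linarith
        calc (s:ℝ) * (Real.exp (-2:ℝ))^s = ((s:ℝ) * Real.exp (-(s:ℝ))) * Real.exp (-(s:ℝ)) := by
              rw [e5]; ring
          _ ≤ 1 * Real.exp (-(s:ℝ)) := by
              apply mul_le_mul_of_nonneg_right e6 (Real.exp_pos _).le
          _ = Real.exp (-(s:ℝ)) := one_mul _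
          _ ≤ Real.exp (-(n:ℝ)) * Real.exp (-4:ℝ) := e7
          _ ≤ Real.exp (-(n:ℝ)) * (1/4) := by
              apply mul_le_mul_of_nonneg_left exp_neg_four_le (Real.exp_pos _).le
          _ = Real.exp (-(n:ℝ))/4 := by ring
      calc P.eval x * (1 - gfun s m u) ≤ 1 * (1 - gfun s m u) := by
            apply mul_le_mul_of_nonneg_right hP.2 (by linarith)
        _ = 1 - gfun s m u := one_mul _
        _ ≤ (s:ℝ) * (Real.exp (-2:ℝ))^s := hcomb
        _ ≤ Real.exp (-(n:ℝ))/4 := hfin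



noncomputable def next (φ : ℝ → ℝ) (hφpos : ∀ x, 1 ≤ x → 0 < φ x)
    (hφ0 : Tendsto φ atTop (nhds 0))
    (p : {q : ℕ × Polynomial ℝ // Good φ q.1 q.2}) :
    {q : ℕ × Polynomial ℝ // Good φ q.1 q.2} :=
  ⟨((step_ex φ hφpos hφ0 p.2).choose, (step_ex φ hφpos hφ0 p.2).choose_spec.choose),
   (step_ex φ hφpos hφ0 p.2).choose_spec.choose_spec.1⟩

lemma next_spec (φ : ℝ → ℝ) (hφpos : ∀ x, 1 ≤ x → 0 < φ x)
    (hφ0 : Tendsto φ atTop (nhds 0))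
    (p : {q : ℕ × Polynomial ℝ // Good φ q.1 q.2}) :
    p.1.1 < (next φ hφpos hφ0 p).1.1 ∧
    Flat φ (next φ hφpos hφ0 p).1.1 (next φ hφpos hφ0 p).1.2 ∧
    (Flat φ p.1.1 p.1.2 → DiffB p.1.1 p.1.2 (next φ hφpos hφ0 p).1.2) := by
  have h := (step_ex φ hφpos hφ0 p.2).choose_spec.choose_spec
  exact ⟨h.2.1, h.2.2.1, h.2.2.2⟩

noncomputable def seq (φ : ℝ → ℝ) (hφpos : ∀ x, 1 ≤ x → 0 < φ x)
    (hφ0 : Tendsto φ atTop (nhds 0))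
    (base : {q : ℕ × Polynomial ℝ // Good φ q.1 q.2}) : ℕ → {q : ℕ × Polynomial ℝ // Good φ q.1 q.2}
  | 0 => base
  | (k+1) => next φ hφpos hφ0 (seq φ hφpos hφ0 base k)



set_option maxHeartbeats 1000000 in
theorem main
    (φ : ℝ → ℝ)
    (hφpos : ∀ x, 1 ≤ x → 0 < φ x)
    (hφanti : AntitoneOn φ (Set.Ici (1:ℝ)))
    (hφ0 : Tendsto φ atTop (nhds 0)) :
    ∃ f : ℝ → ℝ, ContinuousOn f (Set.Icc (-1:ℝ) 1) ∧
      (∃ x ∈ Set.Icc (-1:ℝ) 1, f x ≠ 0) ∧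
      ∃ n : ℕ → ℕ, StrictMono n ∧ (∀ j, 0 < n j) ∧
        ∀ j, En f (n j) ≤ Real.exp (-(n j : ℝ)) ∧
          mf f (Estar f (n j)) ≥ 2 * φ (n j) := by
  -- base stage
  obtain ⟨n₀, hn₀1, hn₀φ⟩ : ∃ n₀ : ℕ, 1 ≤ n₀ ∧ φ n₀ ≤ Real.exp (-1) := by
    have hs : ∀ᶠ t in atTop, φ t < Real.exp (-1) := hφ0.eventually_lt_const (Real.exp_pos _)
    obtain ⟨R, hR⟩ := eventually_atTop.mp hs
    refine ⟨max ⌈R⌉₊ 1, le_max_right _ _, le_of_lt (hR _ ?_)⟩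
    calc R ≤ (⌈R⌉₊:ℝ) := Nat.le_ceil R
      _ ≤ ((max ⌈R⌉₊ 1 : ℕ):ℝ) := by exact_mod_cast le_max_left _ _
  have hgood₀ : Good φ n₀ 1 := by
    refine ⟨hn₀1, hn₀φ, by simp, ?_, by simp⟩
    intro x _
    simp
  set S : ℕ → {q : ℕ × Polynomial ℝ // Good φ q.1 q.2} :=
    seq φ hφpos hφ0 ⟨(n₀, 1), hgood₀⟩ with hSdef
  have hseq_succ : ∀ k, S (k+1) = next φ hφpos hφ0 (S k) := fun k => rfl
  set NN : ℕ → ℕ := fun k => (S (k+1)).1.1 with hNNdef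
  set QQ : ℕ → Polynomial ℝ := fun k => (S (k+1)).1.2 with hQQdef
  have hGood : ∀ k, Good φ (NN k) (QQ k) := fun k => (S (k+1)).2
  have hFlat : ∀ k, Flat φ (NN k) (QQ k) := by
    intro k
    have h := (next_spec φ hφpos hφ0 (S k)).2.1
    rw [← hseq_succ] at h
    exact h
  have hDiff : ∀ k, DiffB (NN k) (QQ k) (QQ (k+1)) := by
    intro k
    have h := (next_spec φ hφpos hφ0 (S (k+1))).2.2
    rw [← hseq_succ] at h
    exact h (hFlat k)
  have hNNlt : ∀ k, NN k < NN (k+1) := by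
    intro k
    have h := (next_spec φ hφpos hφ0 (S (k+1))).1
    rw [← hseq_succ] at h
    exact h
  have hNNmono : StrictMono NN := strictMono_nat_of_lt_succ hNNlt
  have hNN1 : ∀ k, 1 ≤ NN k := fun k => (hGood k).1
  have hNNk : ∀ k, k ≤ NN k := fun k => hNNmono.le_apply
  have hE : (0:ℝ) < Real.exp (-1) := Real.exp_pos _
  have hE1 : Real.exp (-1:ℝ) < 1 := by
    rw [Real.exp_lt_one_iff]; norm_num
  have hEhalf : Real.exp (-1:ℝ) ≤ 1/2 := by
    rw [Real.exp_neg]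
    rw [inv_le_comm₀ (Real.exp_pos 1) (by norm_num)]
    have := Real.exp_one_gt_d9
    linarith
  -- the difference functions
  set d : ℕ → ℝ → ℝ := fun k x => (QQ (k+1)).eval x - (QQ k).eval x with hddef
  have hdb : ∀ k, ∀ x ∈ Set.Icc (-1:ℝ) 1, |d k x| ≤ Real.exp (-(NN k : ℝ))/4 :=
    fun k x hx => hDiff k x hx
  set w : ℕ → ℝ := fun k => (Real.exp (-1:ℝ))^k with hwdef
  have hw : Summable w := summable_geometric_of_lt_one (le_of_lt hE) hE1
  have hexpk : ∀ k : ℕ, Real.exp (-(NN k:ℝ))/4 ≤ w k := by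
    intro k
    have h1 : Real.exp (-(NN k:ℝ)) ≤ Real.exp (-(k:ℝ)) := by
      apply Real.exp_le_exp.mpr
      have : (k:ℝ) ≤ (NN k:ℝ) := by exact_mod_cast hNNk k
      linarith
    have h2 : Real.exp (-(k:ℝ)) = w k := by
      show Real.exp (-(k:ℝ)) = (Real.exp (-1:ℝ))^k
      rw [← Real.exp_nat_mul]
      norm_num
    nlinarith [Real.exp_pos (-(NN k:ℝ))]
  have hdw : ∀ k, ∀ x ∈ Set.Icc (-1:ℝ) 1, ‖d k x‖ ≤ w k := by
    intro k x hx
    rw [Real.norm_eq_abs]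
    exact le_trans (hdb k x hx) (hexpk k)
  set f : ℝ → ℝ := fun x => (QQ 0).eval x + ∑' k, d k x with hfdef
  have hsumm : ∀ x, x ∈ Set.Icc (-1:ℝ) 1 → Summable (fun k => d k x) :=
    fun x hx => Summable.of_norm_bounded hw (fun k => hdw k x hx)
  -- tail bound
  have htail : ∀ K, ∀ x ∈ Set.Icc (-1:ℝ) 1, |f x - (QQ K).eval x| ≤ Real.exp (-(NN K:ℝ))/2 := by
    intro K x hx
    have hsx := hsumm x hx
    have htel : ∑ i ∈ Finset.range K, d i x = (QQ K).eval x - (QQ 0).eval x :=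
      Finset.sum_range_sub (fun i => (QQ i).eval x) K
    have hsplit := (Summable.sum_add_tsum_nat_add K hsx).symm
    have hfx : f x - (QQ K).eval x = ∑' i, d (i+K) x := by
      have h1 : f x = (QQ 0).eval x + (∑ i ∈ Finset.range K, d i x + ∑' i, d (i+K) x) := by
        rw [hfdef]
        simp only
        rw [hsplit]
      rw [htel] at h1
      rw [h1]; ring
    rw [hfx]
    have hNNiK : ∀ i : ℕ, (NN K) + i ≤ NN (i+K) := by
      intro i
      induction i with
      | zero => simp
      | succ i ih =>
        have h := hNNlt (i+K)
        have : i + 1 + K = (i + K) + 1 := by ring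
        rw [this]
        omega
    have hbound : ∀ i, ‖d (i+K) x‖ ≤ (Real.exp (-(NN K:ℝ))/4) * (Real.exp (-1:ℝ))^i := by
      intro i
      have h1 := hdb (i+K) x hx
      have h2 : Real.exp (-(NN (i+K):ℝ)) ≤ Real.exp (-(NN K:ℝ)) * (Real.exp (-1:ℝ))^i := by
        rw [← Real.exp_nat_mul, ← Real.exp_add]
        apply Real.exp_le_exp.mpr
        have h3 : ((NN K):ℝ) + (i:ℝ) ≤ ((NN (i+K)):ℝ) := by exact_mod_cast hNNiK i
        nlinarith
      rw [Real.norm_eq_abs]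
      calc |d (i+K) x| ≤ Real.exp (-(NN (i+K):ℝ))/4 := h1
        _ ≤ (Real.exp (-(NN K:ℝ))/4) * (Real.exp (-1:ℝ))^i := by nlinarith
    have hgsum : HasSum (fun i : ℕ => (Real.exp (-(NN K:ℝ))/4) * (Real.exp (-1:ℝ))^i)
        ((Real.exp (-(NN K:ℝ))/4) * (1 - Real.exp (-1:ℝ))⁻¹) :=
      (hasSum_geometric_of_lt_one (le_of_lt hE) hE1).mul_left _
    have hts := tsum_of_norm_bounded hgsum hbound
    rw [Real.norm_eq_abs] at hts
    have hinv : (1 - Real.exp (-1:ℝ))⁻¹ ≤ 2 := by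
      rw [inv_le_comm₀ (by linarith) (by norm_num)]
      linarith
    calc |∑' i, d (i+K) x| ≤ (Real.exp (-(NN K:ℝ))/4) * (1 - Real.exp (-1:ℝ))⁻¹ := hts
      _ ≤ (Real.exp (-(NN K:ℝ))/4) * 2 := by
          apply mul_le_mul_of_nonneg_left hinv (by positivity)
      _ = Real.exp (-(NN K:ℝ))/2 := by ring
  -- continuity
  have hcont : ContinuousOn f (Set.Icc (-1:ℝ) 1) := by
    have hTU := tendstoUniformlyOn_tsum hw (fun k x hx => hdw k x hx)
    have hconts : ∀ t : Finset ℕ, ContinuousOn (fun x => ∑ k ∈ t, d k x) (Set.Icc (-1:ℝ) 1) := by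
      intro t
      apply Continuous.continuousOn
      apply continuous_finset_sum
      intro k _
      simp only [hddef]
      exact ((QQ (k+1)).continuous).sub ((QQ k).continuous)
    have h2 : ContinuousOn (fun x => ∑' k, d k x) (Set.Icc (-1:ℝ) 1) :=
      hTU.continuousOn (Filter.Eventually.of_forall hconts).frequently
    exact ((QQ 0).continuous.continuousOn).add h2
  -- value at -1
  have hQm1 : ∀ k, (QQ k).eval (-1) = 1 := fun k => (hGood k).2.2.2.2
  have hd0 : ∀ k, d k (-1) = 0 := by
    intro k
    simp only [hddef]
    rw [hQm1, hQm1]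
    ring
  have hf1 : f (-1) = 1 := by
    simp only [hfdef]
    rw [hQm1]
    have hz : (fun k => d k (-1)) = fun _ => (0:ℝ) := funext hd0
    rw [hz, tsum_zero]
    ring
  -- En bound
  have hEn : ∀ K, En f (NN K) ≤ Real.exp (-(NN K:ℝ)) := by
    intro K
    have hdegK : (QQ K).natDegree ≤ NN K := (hGood K).2.2.1
    set G : Polynomial ℝ → ℝ :=
      fun P => sSup ((fun x => |f x - P.eval x|) '' Set.Icc (-1:ℝ) 1) with hGdef
    have hmem : G (QQ K) ∈ G '' {P : Polynomial ℝ | P.natDegree ≤ NN K} :=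
      Set.mem_image_of_mem G hdegK
    have hbdd : BddBelow (G '' {P : Polynomial ℝ | P.natDegree ≤ NN K}) := by
      refine ⟨0, ?_⟩
      rintro y ⟨P, _, rfl⟩
      apply Real.sSup_nonneg
      rintro z ⟨x, _, rfl⟩
      exact abs_nonneg _
    have h1 : En f (NN K) ≤ G (QQ K) := csInf_le hbdd hmem
    have h2 : G (QQ K) ≤ Real.exp (-(NN K:ℝ)) := by
      apply Real.sSup_le
      · rintro y ⟨x, hx, rfl⟩
        have := htail K x hx
        nlinarith [Real.exp_pos (-(NN K:ℝ))]
      · positivity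
    linarith
  -- measure bound
  have hmf : ∀ K, mf f (Estar f (NN K)) ≥ 2 * φ (NN K) := by
    intro K
    have hφK : 0 < φ (NN K) := hφpos _ (by exact_mod_cast hNN1 K)
    have hφK1 : φ (NN K) ≤ 1 := le_trans (hGood K).2.1 (by linarith)
    set T : Set ℝ := {x : ℝ | x ∈ Set.Icc (-1:ℝ) 1 ∧ |f x| ≤ Estar f (NN K)} with hTdef
    have hsub : Set.Icc (1 - 2*φ (NN K)) 1 ⊆ T := by
      intro x hx
      simp only [Set.mem_Icc] at hx
      have hx1 : x ∈ Set.Icc (-1:ℝ) 1 := Set.mem_Icc.mpr ⟨by linarith [hx.1], hx.2⟩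
      have hQ : |(QQ K).eval x| ≤ Real.exp (-(NN K:ℝ))/4 :=
        hFlat K x (Set.mem_Icc.mpr ⟨hx.1, hx.2⟩)
      have hT := htail K x hx1
      have habs : |f x| ≤ Real.exp (-(NN K:ℝ)) := by
        have := abs_sub_abs_le_abs_sub (f x) ((QQ K).eval x)
        have h3 : |f x| ≤ |f x - (QQ K).eval x| + |(QQ K).eval x| := by
          have := abs_add_le (f x - (QQ K).eval x) ((QQ K).eval x)
          simpa using this
        nlinarith [Real.exp_pos (-(NN K:ℝ))]
      have hEs : Real.exp (-(NN K:ℝ)) ≤ Estar f (NN K) := le_max_right _ _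
      exact ⟨hx1, le_trans habs hEs⟩
    have hsub2 : T ⊆ Set.Icc (-1:ℝ) 1 := fun x hx => hx.1
    have h1 : volume (Set.Icc (1 - 2*φ (NN K)) 1) ≤ volume T := measure_mono hsub
    have h2 : volume T ≤ volume (Set.Icc (-1:ℝ) 1) := measure_mono hsub2
    have hne : volume T ≠ ⊤ := by
      apply ne_top_of_le_ne_top _ h2
      rw [Real.volume_Icc]
      exact ENNReal.ofReal_ne_top
    have h3 : (volume (Set.Icc (1 - 2*φ (NN K)) 1)).toReal ≤ (volume T).toReal :=
      ENNReal.toReal_mono hne h1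
    have h4 : (volume (Set.Icc (1 - 2*φ (NN K)) 1)).toReal = 2 * φ (NN K) := by
      rw [Real.volume_Icc, ENNReal.toReal_ofReal (by linarith)]
      ring
    rw [mf]
    rw [h4] at h3
    exact h3
  -- assemble
  refine ⟨f, hcont, ⟨-1, Set.mem_Icc.mpr (by norm_num), by rw [hf1]; norm_num⟩,
    NN, hNNmono, fun j => lt_of_lt_of_le one_pos (hNN1 j), fun j => ⟨hEn j, hmf j⟩⟩


end BLLS

theorem bernstein_large_level_sets
    (φ : ℝ → ℝ)
    (hφpos : ∀ x, 1 ≤ x → 0 < φ x)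
    (hφanti : AntitoneOn φ (Set.Ici (1:ℝ)))
    (hφ0 : Tendsto φ atTop (nhds 0)) :
    ∃ f : ℝ → ℝ, ContinuousOn f (Set.Icc (-1:ℝ) 1) ∧
      (∃ x ∈ Set.Icc (-1:ℝ) 1, f x ≠ 0) ∧
      ∃ n : ℕ → ℕ, StrictMono n ∧ (∀ j, 0 < n j) ∧
        ∀ j, En f (n j) ≤ Real.exp (-(n j : ℝ)) ∧
          mf f (Estar f (n j)) ≥ 2 * φ (n j) := by
  exact BLLS.main φ hφpos hφanti hφ0
end

section
/- Let Q be a real polynomial with Q(0) = 0 and deg Q ≥ 1, let ε > 0, let N be a positive integer, and let φ : [1,+∞) → (0,+∞) be a decreasing function with lim_{t→∞} φ(t) = 0. Then there exist an integer M > N and a real polynomial P with P(0) = 0, deg P ≤ M, ‖P‖_{[-1,1]} ≤ ε, and |(Q+P)(t)| ≤ e^{-2M} for all t with |t| ≤ φ(M). -/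
open Filter Set

lemma bern_nonneg {n' D : ℕ} {y : ℝ} (hy0 : 0 ≤ y) (hy1 : y ≤ 1) :
    0 ≤ ∑ k ∈ Finset.range (D+1), (1-y)^k * y^(n'-k) * (n'.choose k : ℝ) :=
  Finset.sum_nonneg fun k _ => by
    have h1 : (0:ℝ) ≤ 1 - y := by linarith
    exact mul_nonneg (mul_nonneg (pow_nonneg h1 _) (pow_nonneg hy0 _)) (Nat.cast_nonneg _)

lemma bern_le_one {n' D : ℕ} (hD : D ≤ n') {y : ℝ} (hy0 : 0 ≤ y) (hy1 : y ≤ 1) :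
    ∑ k ∈ Finset.range (D+1), (1-y)^k * y^(n'-k) * (n'.choose k : ℝ) ≤ 1 := by
  have h1 : (0:ℝ) ≤ 1 - y := by linarith
  have hsub : Finset.range (D+1) ⊆ Finset.range (n'+1) := by
    intro k hk; simp only [Finset.mem_range] at *; omega
  calc ∑ k ∈ Finset.range (D+1), (1-y)^k * y^(n'-k) * (n'.choose k : ℝ)
      ≤ ∑ k ∈ Finset.range (n'+1), (1-y)^k * y^(n'-k) * (n'.choose k : ℝ) := by
        refine Finset.sum_le_sum_of_subset_of_nonneg hsub (fun k _ _ => ?_)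
        exact mul_nonneg (mul_nonneg (pow_nonneg h1 _) (pow_nonneg hy0 _)) (Nat.cast_nonneg _)
    _ = ((1-y) + y)^n' := (add_pow _ _ _).symm
    _ = 1 := by norm_num

lemma bern_depth {n n' D : ℕ} (h : n' = n + D) {y : ℝ} (hy0 : 0 ≤ y) (hy1 : y ≤ 1) :
    ∑ k ∈ Finset.range (D+1), (1-y)^k * y^(n'-k) * (n'.choose k : ℝ) ≤ y^n * 2^n' := by
  have h1 : (0:ℝ) ≤ 1 - y := by linarith
  calc ∑ k ∈ Finset.range (D+1), (1-y)^k * y^(n'-k) * (n'.choose k : ℝ)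
      ≤ ∑ k ∈ Finset.range (D+1), y^n * (n'.choose k : ℝ) := by
        refine Finset.sum_le_sum (fun k hk => ?_)
        have hk' : k ≤ D := Nat.lt_succ_iff.mp (Finset.mem_range.mp hk)
        have e1 : (1-y)^k ≤ 1 := pow_le_one₀ h1 (by linarith)
        have e2 : y^(n'-k) ≤ y^n := pow_le_pow_of_le_one hy0 hy1 (by omega)
        have e3 : (1-y)^k * y^(n'-k) ≤ 1 * y^n :=
          mul_le_mul e1 e2 (pow_nonneg hy0 _) zero_le_one
        rw [one_mul] at e3
        exact mul_le_mul_of_nonneg_right e3 (Nat.cast_nonneg _)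
    _ = y^n * ∑ k ∈ Finset.range (D+1), (n'.choose k : ℝ) := by rw [Finset.mul_sum]
    _ ≤ y^n * 2^n' := by
        refine mul_le_mul_of_nonneg_left ?_ (pow_nonneg hy0 _)
        have hnat : ∑ k ∈ Finset.range (D+1), n'.choose k ≤ 2^n' := by
          calc ∑ k ∈ Finset.range (D+1), n'.choose k
              ≤ ∑ k ∈ Finset.range (n'+1), n'.choose k :=
                Finset.sum_le_sum_of_subset (by intro k hk; simp only [Finset.mem_range] at *; omega)
            _ = 2^n' := Nat.sum_range_choose n'
        calc (∑ k ∈ Finset.range (D+1), (n'.choose k : ℝ))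
            = ((∑ k ∈ Finset.range (D+1), n'.choose k : ℕ) : ℝ) := by push_cast; ring
          _ ≤ ((2^n' : ℕ) : ℝ) := by exact_mod_cast hnat
          _ = (2:ℝ)^n' := by push_cast; ring

lemma bern_tail {n' D : ℕ} (hD : D + 1 ≤ n') {y q z : ℝ} (hq0 : 0 ≤ q) (hz : 1 ≤ z)
    (hy0 : 0 ≤ y) (hyq : |1 - y| ≤ q) (hy2 : y ≤ 1 + q) :
    |1 - ∑ k ∈ Finset.range (D+1), (1-y)^k * y^(n'-k) * (n'.choose k : ℝ)|
      ≤ ((q*z + (1+q))/z)^(D+1) * (q*z + (1+q))^(n' - (D+1)) := by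
  have hz0 : (0:ℝ) < z := lt_of_lt_of_le one_pos hz
  have hq1 : (0:ℝ) ≤ 1 + q := by linarith
  have hbin : (1:ℝ) = ∑ k ∈ Finset.range (n'+1), (1-y)^k * y^(n'-k) * (n'.choose k : ℝ) := by
    rw [← add_pow]; norm_num
  have h2 := Finset.sum_Ico_consecutive (fun k => (1-y)^k * y^(n'-k) * (n'.choose k : ℝ))
    (Nat.zero_le (D+1)) (by omega : D+1 ≤ n'+1)
  rw [← Finset.range_eq_Ico] at h2
  rw [← Finset.range_eq_Ico] at h2
  have hsplit : 1 - ∑ k ∈ Finset.range (D+1), (1-y)^k * y^(n'-k) * (n'.choose k : ℝ)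
      = ∑ k ∈ Finset.Ico (D+1) (n'+1), (1-y)^k * y^(n'-k) * (n'.choose k : ℝ) := by
    linarith [hbin, h2]
  rw [hsplit]
  calc |∑ k ∈ Finset.Ico (D+1) (n'+1), (1-y)^k * y^(n'-k) * (n'.choose k : ℝ)|
      ≤ ∑ k ∈ Finset.Ico (D+1) (n'+1), |(1-y)^k * y^(n'-k) * (n'.choose k : ℝ)| :=
        Finset.abs_sum_le_sum_abs _ _
    _ ≤ ∑ k ∈ Finset.Ico (D+1) (n'+1), ((q*z)^k * (1+q)^(n'-k) * (n'.choose k : ℝ)) / z^(D+1) := by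
        refine Finset.sum_le_sum (fun k hk => ?_)
        obtain ⟨hk1, hk2⟩ := Finset.mem_Ico.mp hk
        rw [abs_mul, abs_mul, abs_pow, abs_pow, abs_of_nonneg hy0, Nat.abs_cast]
        rw [le_div_iff₀ (pow_pos hz0 _)]
        have e1 : |1-y|^k ≤ q^k := pow_le_pow_left₀ (abs_nonneg _) hyq k
        have e2 : y^(n'-k) ≤ (1+q)^(n'-k) := pow_le_pow_left₀ hy0 hy2 _
        have e3 : q^k * z^(D+1) ≤ (q*z)^k := by
          rw [mul_pow]
          exact mul_le_mul_of_nonneg_left (pow_le_pow_right₀ hz hk1) (pow_nonneg hq0 _)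
        calc |1-y|^k * y^(n'-k) * (n'.choose k : ℝ) * z^(D+1)
            ≤ q^k * (1+q)^(n'-k) * (n'.choose k : ℝ) * z^(D+1) := by
              have h4 : |1-y|^k * y^(n'-k) ≤ q^k * (1+q)^(n'-k) :=
                mul_le_mul e1 e2 (pow_nonneg hy0 _) (pow_nonneg hq0 _)
              exact mul_le_mul_of_nonneg_right (mul_le_mul_of_nonneg_right h4 (Nat.cast_nonneg _))
                (pow_nonneg hz0.le _)
          _ = (q^k * z^(D+1)) * ((1+q)^(n'-k) * (n'.choose k : ℝ)) := by ring
          _ ≤ (q*z)^k * ((1+q)^(n'-k) * (n'.choose k : ℝ)) :=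
              mul_le_mul_of_nonneg_right e3
                (mul_nonneg (pow_nonneg hq1 _) (Nat.cast_nonneg _))
          _ = (q*z)^k * (1+q)^(n'-k) * (n'.choose k : ℝ) := by ring
    _ = (∑ k ∈ Finset.Ico (D+1) (n'+1), (q*z)^k * (1+q)^(n'-k) * (n'.choose k : ℝ)) / z^(D+1) := by
        rw [Finset.sum_div]
    _ ≤ (∑ k ∈ Finset.range (n'+1), (q*z)^k * (1+q)^(n'-k) * (n'.choose k : ℝ)) / z^(D+1) := by
        have hsub : Finset.Ico (D+1) (n'+1) ⊆ Finset.range (n'+1) := by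
          intro k hk; rw [Finset.mem_range]; exact (Finset.mem_Ico.mp hk).2
        have hmono : ∑ k ∈ Finset.Ico (D+1) (n'+1), (q*z)^k * (1+q)^(n'-k) * (n'.choose k : ℝ)
            ≤ ∑ k ∈ Finset.range (n'+1), (q*z)^k * (1+q)^(n'-k) * (n'.choose k : ℝ) := by
          refine Finset.sum_le_sum_of_subset_of_nonneg hsub (fun k _ _ => ?_)
          exact mul_nonneg (mul_nonneg (pow_nonneg (mul_nonneg hq0 hz0.le) _)
            (pow_nonneg hq1 _)) (Nat.cast_nonneg _)
        exact (div_le_div_iff_of_pos_right (pow_pos hz0 _)).mpr hmono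
    _ = (q*z + (1+q))^n' / z^(D+1) := by rw [← add_pow]
    _ = ((q*z + (1+q))/z)^(D+1) * (q*z + (1+q))^(n' - (D+1)) := by
        have hexp : (D+1) + (n' - (D+1)) = n' := by omega
        rw [div_pow, div_mul_eq_mul_div, ← pow_add, hexp]

set_option maxHeartbeats 1000000

theorem deep_zero_corollary
    (Q : Polynomial ℝ) (hQ0 : Q.eval 0 = 0) (hQdeg : 1 ≤ Q.natDegree)
    (ε : ℝ) (hε : 0 < ε) (N : ℕ) (hN : 0 < N)
    (φ : ℝ → ℝ) (hφpos : ∀ x, 1 ≤ x → 0 < φ x)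
    (hφanti : AntitoneOn φ (Set.Ici (1:ℝ)))
    (hφ0 : Tendsto φ atTop (nhds 0)) :
    ∃ M : ℕ, N < M ∧
      ∃ P : Polynomial ℝ, P.eval 0 = 0 ∧ P.natDegree ≤ M ∧
        (∀ x ∈ Set.Icc (-1:ℝ) 1, |P.eval x| ≤ ε) ∧
        ∀ t : ℝ, |t| ≤ φ M → |(Q + P).eval t| ≤ Real.exp (-2 * M) := by
  classical
  have hQne : Q ≠ 0 := by
    intro h; rw [h] at hQdeg; simp at hQdeg
  -- amplitude A : sum of abs of coefficients
  obtain ⟨A, hAdef⟩ : ∃ A : ℝ, A = ∑ i ∈ Finset.range (Q.natDegree + 1), |Q.coeff i| :=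
    ⟨_, rfl⟩
  have hA0 : 0 < A := by
    have h1 : 0 < |Q.coeff Q.natDegree| := by
      rw [Polynomial.coeff_natDegree]
      exact abs_pos.mpr (Polynomial.leadingCoeff_ne_zero.mpr hQne)
    have h2 : |Q.coeff Q.natDegree| ≤ A := by
      rw [hAdef]
      exact Finset.single_le_sum (f := fun i => |Q.coeff i|) (fun i _ => abs_nonneg _)
        (Finset.self_mem_range_succ Q.natDegree)
    linarith
  have hQA : ∀ t : ℝ, |t| ≤ 1 → |Q.eval t| ≤ A * |t| := by
    intro t ht
    rw [Polynomial.eval_eq_sum_range]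
    refine (Finset.abs_sum_le_sum_abs _ _).trans ?_
    rw [hAdef, Finset.sum_mul]
    refine Finset.sum_le_sum (fun i _ => ?_)
    rw [abs_mul, abs_pow]
    rcases Nat.eq_zero_or_pos i with h0 | h1
    · subst h0
      have hc0 : Q.coeff 0 = 0 := by rw [Polynomial.coeff_zero_eq_eval_zero, hQ0]
      simp [hc0]
    · have h2 : |t|^i ≤ |t| := by
        have := pow_le_pow_of_le_one (abs_nonneg t) ht h1
        simpa using this
      exact mul_le_mul_of_nonneg_left h2 (abs_nonneg _)
  have hQ1 : ∀ t : ℝ, |t| ≤ 1 → |Q.eval t| ≤ A := by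
    intro t ht
    refine (hQA t ht).trans ?_
    nlinarith [abs_nonneg t]
  -- basic constants
  obtain ⟨ε₁, hε₁def⟩ : ∃ x : ℝ, x = min 1 (ε/(2*A)) := ⟨_, rfl⟩
  have hε₁0 : 0 < ε₁ := by rw [hε₁def]; exact lt_min one_pos (by positivity)
  have hε₁1 : ε₁ ≤ 1 := by rw [hε₁def]; exact min_le_left _ _
  have hAε₁ : A * ε₁ ≤ ε/2 := by
    have h1 : ε₁ ≤ ε/(2*A) := by rw [hε₁def]; exact min_le_right _ _
    have h2 : A * ε₁ ≤ A * (ε/(2*A)) := mul_le_mul_of_nonneg_left h1 hA0.le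
    have h3 : A * (ε/(2*A)) = ε/2 := by field_simp
    linarith
  obtain ⟨b, hbdef⟩ : ∃ x : ℝ, x = ε₁^2 := ⟨_, rfl⟩
  have hb0 : 0 < b := by rw [hbdef]; positivity
  have hb1 : b ≤ 1 := by rw [hbdef]; nlinarith
  obtain ⟨c, hcdef⟩ : ∃ x : ℝ, x = (1+b)/2 := ⟨_, rfl⟩
  have hc0 : 0 < c := by rw [hcdef]; linarith
  have hbc : b ≤ c := by rw [hcdef]; linarith
  have hcinv2 : c⁻¹ ≤ 2 := by
    rw [hcdef, inv_div]
    rw [div_le_iff₀ (by linarith : (0:ℝ) < 1 + b)]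
    linarith
  obtain ⟨q, hqdef⟩ : ∃ x : ℝ, x = (1-b)/(1+b) := ⟨_, rfl⟩
  have hq0 : 0 ≤ q := by rw [hqdef]; exact div_nonneg (by linarith) (by linarith)
  have hq1 : q ≤ 1 - b := by
    rw [hqdef]; exact div_le_self (by linarith) (by linarith)
  have hq2 : q ≤ 1 := by linarith
  have hcq : c⁻¹ = 1 + q := by
    rw [hcdef, hqdef, inv_div]
    have h1b : (1:ℝ)+b ≠ 0 := by linarith
    field_simp
    ring
  obtain ⟨z, hzdef⟩ : ∃ x : ℝ, x = 2*(1+q)/b := ⟨_, rfl⟩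
  have hz1 : 1 ≤ z := by
    rw [hzdef, le_div_iff₀ hb0]; nlinarith
  have hz0 : (0:ℝ) < z := lt_of_lt_of_le one_pos hz1
  have hbz : b * z = 2*(1+q) := by
    rw [hzdef]; field_simp
  have hstepA : (q*z + (1+q))/z ≤ 1 - b/2 := by
    rw [div_le_iff₀ hz0]
    nlinarith [mul_nonneg hz0.le (show (0:ℝ) ≤ 1 - q - b by linarith), hbz]
  have hstepB : q*z + (1+q) ≤ 6/b := by
    rw [le_div_iff₀ hb0]
    have h1 : q*(b*z) = 2*q*(1+q) := by rw [hbz]; ring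
    have hqq : 2*q*(1+q) ≤ 4 := by nlinarith
    have hbq : (1+q)*b ≤ 2 := by nlinarith
    nlinarith [h1]
  have hstepB0 : (0:ℝ) ≤ q*z + (1+q) := by positivity
  -- logarithmic constants
  obtain ⟨L6, hL6def⟩ : ∃ x : ℝ, x = Real.log (6/b) := ⟨_, rfl⟩
  have hL60 : 0 ≤ L6 := by
    rw [hL6def]
    exact Real.log_nonneg (by rw [le_div_iff₀ hb0]; linarith)
  obtain ⟨Lε, hLεdef⟩ : ∃ x : ℝ, x = -Real.log ε₁ := ⟨_, rfl⟩
  have hLε0 : 0 ≤ Lε := by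
    rw [hLεdef, neg_nonneg]
    exact Real.log_nonpos hε₁0.le hε₁1
  obtain ⟨K₁, hK₁def⟩ : ∃ x : ℝ, x = (2/b)*(L6 + Lε) + 1 := ⟨_, rfl⟩
  have hK₁0 : 0 ≤ K₁ := by
    rw [hK₁def]
    have h1 : 0 ≤ (2/b)*(L6 + Lε) := mul_nonneg (by positivity) (by linarith)
    linarith
  obtain ⟨LC, hLCdef⟩ : ∃ x : ℝ, x = max 0 (Real.log A) := ⟨_, rfl⟩
  have hLC0 : 0 ≤ LC := by rw [hLCdef]; exact le_max_left _ _
  have hALC : A ≤ Real.exp LC := by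
    have h1 : Real.log A ≤ LC := by rw [hLCdef]; exact le_max_right _ _
    calc A = Real.exp (Real.log A) := (Real.exp_log hA0).symm
      _ ≤ Real.exp LC := Real.exp_le_exp.mpr h1
  obtain ⟨Λ, hΛdef⟩ : ∃ x : ℝ, x = (Q.natDegree : ℝ) + LC + 3 + 3*K₁ := ⟨_, rfl⟩
  obtain ⟨τ, hτdef⟩ : ∃ x : ℝ, x = min (Real.exp (-Λ)) ε₁ := ⟨_, rfl⟩
  have hτ0 : 0 < τ := by rw [hτdef]; exact lt_min (Real.exp_pos _) hε₁0
  obtain ⟨x₀, hx₀⟩ := Filter.eventually_atTop.mp (hφ0.eventually_lt_const hτ0)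
  -- choice of parameters
  obtain ⟨m, hmdef⟩ : ∃ x : ℕ, x = max ⌈x₀⌉₊ (N+1) := ⟨_, rfl⟩
  obtain ⟨n, hndef⟩ : ∃ x : ℕ, x = m + 1 := ⟨_, rfl⟩
  have hn1 : (1:ℝ) ≤ (n:ℝ) := by
    have h1 : 1 ≤ n := by omega
    exact_mod_cast h1
  obtain ⟨D, hDdef⟩ : ∃ x : ℕ, x = ⌈(2/b) * ((n:ℝ) * L6 + Lε)⌉₊ := ⟨_, rfl⟩
  have hD_ge : (2/b) * ((n:ℝ)*L6 + Lε) ≤ (D:ℝ) := by rw [hDdef]; exact Nat.le_ceil _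
  have hDK : (D:ℝ) ≤ (n:ℝ) * K₁ := by
    have h1 : ((D:ℕ):ℝ) < (2/b)*((n:ℝ)*L6+Lε) + 1 := by
      rw [hDdef]
      refine Nat.ceil_lt_add_one ?_
      exact mul_nonneg (by positivity)
        (add_nonneg (mul_nonneg (Nat.cast_nonneg n) hL60) hLε0)
    rw [hK₁def]
    nlinarith [mul_nonneg (mul_nonneg (show (0:ℝ) ≤ 2/b by positivity) hLε0)
      (show (0:ℝ) ≤ (n:ℝ) - 1 by linarith)]
  have hD0 : (0:ℝ) ≤ (D:ℝ) := Nat.cast_nonneg D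
  obtain ⟨n', hn'def⟩ : ∃ x : ℕ, x = n + D := ⟨_, rfl⟩
  obtain ⟨M, hMdef⟩ : ∃ x : ℕ, x = Q.natDegree + 2*n' := ⟨_, rfl⟩
  have hMr : (M:ℝ) = (Q.natDegree:ℝ) + 2*((n:ℝ) + (D:ℝ)) := by
    rw [hMdef, hn'def]; push_cast; ring
  have hd0 : (0:ℝ) ≤ (Q.natDegree:ℝ) := Nat.cast_nonneg _
  have hLCbound : 0 ≤ LC := hLC0
  have hkey : LC + ((n:ℝ)*(1 - 2*Λ) + ((n:ℝ)+(D:ℝ)))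
      ≤ -2*((Q.natDegree:ℝ) + 2*((n:ℝ)+(D:ℝ))) := by
    rw [hΛdef]
    have p1 : 0 ≤ ((n:ℝ)-1) * (Q.natDegree:ℝ) := mul_nonneg (by linarith) hd0
    have p2 : 0 ≤ (2*(n:ℝ)-1) * LC := mul_nonneg (by linarith) hLC0
    have p5 : 0 ≤ (n:ℝ) * K₁ := mul_nonneg (by linarith) hK₁0
    linarith [hDK, p1, p2, p5]
  -- the polynomial
  obtain ⟨Gp, hGpdef⟩ : ∃ G : Polynomial ℝ, G = ∑ k ∈ Finset.range (D+1),
      (1 - Polynomial.C c⁻¹ * Polynomial.X)^k * (Polynomial.C c⁻¹ * Polynomial.X)^(n'-k)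
        * Polynomial.C (n'.choose k : ℝ) := ⟨_, rfl⟩
  have hGeval : ∀ x : ℝ, Gp.eval x
      = ∑ k ∈ Finset.range (D+1), (1 - c⁻¹*x)^k * (c⁻¹*x)^(n'-k) * (n'.choose k : ℝ) := by
    intro x
    rw [hGpdef, Polynomial.eval_finset_sum]
    refine Finset.sum_congr rfl (fun k _ => ?_)
    simp only [Polynomial.eval_mul, Polynomial.eval_pow, Polynomial.eval_sub,
      Polynomial.eval_one, Polynomial.eval_C, Polynomial.eval_X]
  obtain ⟨P, hPdef⟩ : ∃ P : Polynomial ℝ, P = Q * (Gp.comp (Polynomial.X^2) - 1) := ⟨_, rfl⟩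
  have hPeval : ∀ x : ℝ, P.eval x = Q.eval x * (Gp.eval (x^2) - 1) := by
    intro x
    rw [hPdef]
    simp only [Polynomial.eval_mul, Polynomial.eval_sub, Polynomial.eval_one,
      Polynomial.eval_comp, Polynomial.eval_pow, Polynomial.eval_X]
  have hQPeval : ∀ x : ℝ, (Q + P).eval x = Q.eval x * Gp.eval (x^2) := by
    intro x
    rw [Polynomial.eval_add, hPeval]; ring
  -- degree bounds
  have hGdeg : Gp.natDegree ≤ n' := by
    rw [hGpdef]
    refine Polynomial.natDegree_sum_le_of_forall_le _ _ (fun k hk => ?_)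
    have hk' : k ≤ D := Nat.lt_succ_iff.mp (Finset.mem_range.mp hk)
    have e0 : (1 - Polynomial.C c⁻¹ * Polynomial.X : Polynomial ℝ).natDegree ≤ 1 := by
      refine (Polynomial.natDegree_sub_le _ _).trans ?_
      refine max_le (by simp) ?_
      refine (Polynomial.natDegree_C_mul_le _ _).trans ?_
      simp
    have e1 : ((1 - Polynomial.C c⁻¹ * Polynomial.X : Polynomial ℝ)^k).natDegree ≤ k := by
      refine (Polynomial.natDegree_pow_le).trans ?_
      calc k * (1 - Polynomial.C c⁻¹ * Polynomial.X : Polynomial ℝ).natDegree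
          ≤ k * 1 := Nat.mul_le_mul_left k e0
        _ = k := Nat.mul_one k
    have e2 : ((Polynomial.C c⁻¹ * Polynomial.X : Polynomial ℝ)^(n'-k)).natDegree ≤ n' - k := by
      refine (Polynomial.natDegree_pow_le).trans ?_
      have e3 : (Polynomial.C c⁻¹ * Polynomial.X : Polynomial ℝ).natDegree ≤ 1 :=
        (Polynomial.natDegree_C_mul_le _ _).trans (by simp)
      calc (n'-k) * (Polynomial.C c⁻¹ * Polynomial.X : Polynomial ℝ).natDegree
          ≤ (n'-k) * 1 := Nat.mul_le_mul_left _ e3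
        _ = n' - k := Nat.mul_one _
    refine (Polynomial.natDegree_mul_le).trans ?_
    have e4 := Polynomial.natDegree_mul_le
      (p := (1 - Polynomial.C c⁻¹ * Polynomial.X : Polynomial ℝ)^k)
      (q := (Polynomial.C c⁻¹ * Polynomial.X : Polynomial ℝ)^(n'-k))
    have e5 : (Polynomial.C ((n'.choose k : ℝ))).natDegree = 0 := Polynomial.natDegree_C _
    omega
  have hPdeg : P.natDegree ≤ M := by
    rw [hPdef, hMdef]
    refine (Polynomial.natDegree_mul_le).trans ?_
    have h1 : (Gp.comp (Polynomial.X^2) - 1).natDegree ≤ n' * 2 := by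
      refine (Polynomial.natDegree_sub_le _ _).trans ?_
      refine max_le ?_ (by simp)
      refine (Polynomial.natDegree_comp_le).trans ?_
      rw [Polynomial.natDegree_X_pow]
      exact Nat.mul_le_mul_right 2 hGdeg
    omega
  -- properties of M
  have hNM : N < M := by
    have h1 : N + 1 ≤ m := by rw [hmdef]; exact le_max_right _ _
    rw [hMdef, hn'def, hndef]; omega
  have hMx : x₀ ≤ (M:ℝ) := by
    have h1 : ⌈x₀⌉₊ ≤ m := by rw [hmdef]; exact le_max_left _ _
    have h2 : m ≤ M := by rw [hMdef, hn'def, hndef]; omega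
    calc x₀ ≤ (⌈x₀⌉₊:ℝ) := Nat.le_ceil x₀
      _ ≤ (M:ℝ) := by exact_mod_cast h1.trans h2
  have hφτ : φ (M:ℝ) ≤ τ := (hx₀ _ hMx).le
  have hφε₁ : φ (M:ℝ) ≤ ε₁ := hφτ.trans (by rw [hτdef]; exact min_le_right _ _)
  have hφΛ : φ (M:ℝ) ≤ Real.exp (-Λ) := hφτ.trans (by rw [hτdef]; exact min_le_left _ _)
  have h2e : (2:ℝ) ≤ Real.exp 1 := by
    have := Real.add_one_le_exp 1; linarith
  -- MAIN
  refine ⟨M, hNM, P, ?_, hPdeg, ?_, ?_⟩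
  · rw [hPeval, hQ0]; ring
  · -- sup norm bound on [-1,1]
    intro x hx
    have hx1 : |x| ≤ 1 := abs_le.mpr ⟨hx.1, hx.2⟩
    have hxsq : x^2 ≤ 1 := by
      rw [← sq_abs]; exact pow_le_one₀ (abs_nonneg x) hx1
    have hy0 : 0 ≤ c⁻¹ * x^2 := by positivity
    rw [hPeval, abs_mul, hGeval]
    rcases le_or_gt (x^2) b with hcase | hcase
    · -- |x| small
      have hy1 : c⁻¹ * x^2 ≤ 1 := by
        calc c⁻¹ * x^2 ≤ c⁻¹ * c :=
              mul_le_mul_of_nonneg_left (hcase.trans hbc) (inv_nonneg.mpr hc0.le)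
          _ = 1 := inv_mul_cancel₀ (ne_of_gt hc0)
      have hg0 := bern_nonneg (n' := n') (D := D) hy0 hy1
      have hg1 := bern_le_one (n' := n') (D := D) (by omega) hy0 hy1
      have habs : |(∑ k ∈ Finset.range (D+1),
          (1 - c⁻¹*x^2)^k * (c⁻¹*x^2)^(n'-k) * (n'.choose k : ℝ)) - 1| ≤ 1 :=
        abs_le.mpr ⟨by linarith, by linarith⟩
      have hxε₁ : |x| ≤ ε₁ := by
        have hbx : x^2 ≤ ε₁^2 := by rw [← hbdef]; exact hcase
        exact abs_le.mpr (abs_le_of_sq_le_sq' hbx hε₁0.le)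

      calc |Q.eval x| * |(∑ k ∈ Finset.range (D+1),
            (1 - c⁻¹*x^2)^k * (c⁻¹*x^2)^(n'-k) * (n'.choose k : ℝ)) - 1|
          ≤ (A * |x|) * 1 := mul_le_mul (hQA x hx1) habs (abs_nonneg _)
            (by positivity)
        _ = A * |x| := mul_one _
        _ ≤ A * ε₁ := mul_le_mul_of_nonneg_left hxε₁ hA0.le
        _ ≤ ε/2 := hAε₁
        _ ≤ ε := by linarith
    · -- |x| in the bulk
      have hyb : c⁻¹ * b ≤ c⁻¹ * x^2 :=
        mul_le_mul_of_nonneg_left hcase.le (inv_nonneg.mpr hc0.le)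
      have hy1' : c⁻¹ * x^2 ≤ c⁻¹ := by
        calc c⁻¹ * x^2 ≤ c⁻¹ * 1 := mul_le_mul_of_nonneg_left hxsq (inv_nonneg.mpr hc0.le)
          _ = c⁻¹ := mul_one _
      have h1b : (1:ℝ)+b ≠ 0 := by linarith
      have hcb : 1 - c⁻¹ * b = q := by
        rw [hcq, hqdef]
        field_simp
        ring
      have hcq' : 1 - c⁻¹ = -q := by rw [hcq]; ring
      have hyq : |1 - c⁻¹*x^2| ≤ q := by
        refine abs_le.mpr ⟨?_, ?_⟩
        · linarith
        · linarith
      have hy2 : c⁻¹*x^2 ≤ 1 + q := by rw [← hcq]; exact hy1'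
      have htail := bern_tail (n' := n') (D := D) (by omega) hq0 hz1 hy0 hyq hy2
      -- numeric bound for the tail
      have hexp2 : n' - (D+1) = m := by rw [hn'def, hndef]; omega
      have hnum : ((q*z + (1+q))/z)^(D+1) * (q*z + (1+q))^(n' - (D+1)) ≤ ε₁ := by
        rw [hexp2]
        have f1 : ((q*z + (1+q))/z)^(D+1) ≤ (1 - b/2)^(D+1) :=
          pow_le_pow_left₀ (by positivity) hstepA _
        have f2 : (q*z + (1+q))^m ≤ (6/b)^m := pow_le_pow_left₀ hstepB0 hstepB _
        have f3 : (1 - b/2 : ℝ) ≤ Real.exp (-(b/2)) := by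
          have := Real.add_one_le_exp (-(b/2)); linarith
        have f4 : (1 - b/2 : ℝ)^(D+1) ≤ Real.exp (-(b/2))^(D+1) :=
          pow_le_pow_left₀ (by linarith) f3 _
        have f5 : Real.exp (-(b/2))^(D+1) = Real.exp (-((b/2)*((D:ℝ)+1))) := by
          rw [← Real.exp_nat_mul]; push_cast; ring_nf
        have f6 : (n:ℝ)*L6 + Lε ≤ (b/2)*((D:ℝ)+1) := by
          have f7 : (b/2)*((2/b)*((n:ℝ)*L6 + Lε)) = (n:ℝ)*L6 + Lε := by
            field_simp
          have w1 := mul_le_mul_of_nonneg_left hD_ge (show (0:ℝ) ≤ b/2 by positivity)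
          rw [f7] at w1
          have w2 : (b/2)*(D:ℝ) ≤ (b/2)*((D:ℝ)+1) :=
            mul_le_mul_of_nonneg_left (by linarith) (by positivity)
          linarith
        have f8 : Real.exp (-((b/2)*((D:ℝ)+1))) ≤ Real.exp (-((n:ℝ)*L6 + Lε)) :=
          Real.exp_le_exp.mpr (by linarith)
        have f9 : Real.exp (-((n:ℝ)*L6 + Lε)) = (b/6)^n * ε₁ := by
          rw [neg_add, Real.exp_add]
          congr 1
          · rw [show -((n:ℝ)*L6) = (n:ℝ)*(-L6) by ring, Real.exp_nat_mul]
            congr 1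
            rw [hL6def, Real.exp_neg, Real.exp_log (by positivity : (0:ℝ) < 6/b), inv_div]
          · rw [hLεdef, neg_neg, Real.exp_log hε₁0]
        have f10 : (b/6:ℝ)^m * (6/b)^m = 1 := by
          rw [← mul_pow, show (b/6:ℝ)*(6/b) = 1 by field_simp]
          exact one_pow m
        have f11 : ((b/6:ℝ)^n * ε₁) * (6/b)^m = (b/6)*ε₁ := by
          rw [hndef, pow_succ]
          calc (b/6:ℝ)^m * (b/6) * ε₁ * (6/b)^m
              = ((b/6:ℝ)^m * (6/b)^m) * ((b/6)*ε₁) := by ring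
            _ = (b/6)*ε₁ := by rw [f10]; ring
        have g1 : ((q*z + (1+q))/z)^(D+1) ≤ (b/6)^n * ε₁ := by
          calc ((q*z + (1+q))/z)^(D+1) ≤ (1 - b/2)^(D+1) := f1
            _ ≤ Real.exp (-(b/2))^(D+1) := f4
            _ = Real.exp (-((b/2)*((D:ℝ)+1))) := f5
            _ ≤ Real.exp (-((n:ℝ)*L6 + Lε)) := f8
            _ = (b/6)^n * ε₁ := f9
        have f12 : ((q*z + (1+q))/z)^(D+1) * (q*z + (1+q))^m ≤ ((b/6)^n * ε₁) * (6/b)^m := by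
          refine mul_le_mul g1 f2 (pow_nonneg hstepB0 _) ?_
          positivity
        calc ((q*z + (1+q))/z)^(D+1) * (q*z + (1+q))^m
            ≤ ((b/6)^n * ε₁) * (6/b)^m := f12
          _ = (b/6)*ε₁ := f11
          _ ≤ ε₁ := by
              have hh : (b/6)*ε₁ ≤ 1*ε₁ := mul_le_mul_of_nonneg_right (by linarith) hε₁0.le
              linarith
      have habs2 : |(∑ k ∈ Finset.range (D+1),
          (1 - c⁻¹*x^2)^k * (c⁻¹*x^2)^(n'-k) * (n'.choose k : ℝ)) - 1| ≤ ε₁ := by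
        rw [abs_sub_comm]
        exact htail.trans hnum
      calc |Q.eval x| * |(∑ k ∈ Finset.range (D+1),
            (1 - c⁻¹*x^2)^k * (c⁻¹*x^2)^(n'-k) * (n'.choose k : ℝ)) - 1|
          ≤ A * ε₁ := mul_le_mul (hQ1 x hx1) habs2 (abs_nonneg _) hA0.le
        _ ≤ ε/2 := hAε₁
        _ ≤ ε := by linarith
  · -- deep zero bound
    intro t ht
    have hδ0 : (0:ℝ) ≤ φ (M:ℝ) := (abs_nonneg t).trans ht
    have ht1 : |t| ≤ 1 := ht.trans (hφε₁.trans hε₁1)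
    have ht2b : t^2 ≤ b := by
      have h1 : t^2 ≤ ε₁^2 := by
        rw [← sq_abs]; exact pow_le_pow_left₀ (abs_nonneg t) (ht.trans hφε₁) 2
      rw [hbdef]; exact h1
    have hy0 : 0 ≤ c⁻¹ * t^2 := by positivity
    have hy1 : c⁻¹ * t^2 ≤ 1 := by
      calc c⁻¹ * t^2 ≤ c⁻¹ * c :=
            mul_le_mul_of_nonneg_left (ht2b.trans hbc) (inv_nonneg.mpr hc0.le)
        _ = 1 := inv_mul_cancel₀ (ne_of_gt hc0)
    rw [hQPeval, abs_mul, hGeval]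
    have hg0 := bern_nonneg (n' := n') (D := D) hy0 hy1
    have hgd := bern_depth (n := n) (n' := n') (D := D) hn'def hy0 hy1
    have hyd : c⁻¹ * t^2 ≤ Real.exp (1 - 2*Λ) := by
      have g1 : c⁻¹ * t^2 ≤ 2 * t^2 := mul_le_mul_of_nonneg_right hcinv2 (sq_nonneg t)
      have g2 : t^2 ≤ (φ (M:ℝ))^2 := by
        rw [← sq_abs]; exact pow_le_pow_left₀ (abs_nonneg t) ht 2
      have g3 : (φ (M:ℝ))^2 ≤ Real.exp (-Λ)^2 := pow_le_pow_left₀ hδ0 hφΛ 2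
      have g4 : Real.exp (-Λ)^2 = Real.exp (-(2*Λ)) := by
        rw [← Real.exp_nat_mul]; push_cast; ring_nf
      have g5 : 2 * Real.exp (-(2*Λ)) ≤ Real.exp 1 * Real.exp (-(2*Λ)) :=
        mul_le_mul_of_nonneg_right h2e (Real.exp_pos _).le
      have g6 : Real.exp 1 * Real.exp (-(2*Λ)) = Real.exp (1 - 2*Λ) := by
        rw [← Real.exp_add]; ring_nf
      have w3 : 2*t^2 ≤ 2*(φ (M:ℝ))^2 := by linarith
      linarith [g1, g2, g3, g4, g5, g6, w3]
    have hsum_le : (∑ k ∈ Finset.range (D+1),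
        (1 - c⁻¹*t^2)^k * (c⁻¹*t^2)^(n'-k) * (n'.choose k : ℝ))
          ≤ Real.exp ((n:ℝ)*(1 - 2*Λ)) * Real.exp (n':ℝ) := by
      refine hgd.trans ?_
      have g7 : (c⁻¹*t^2)^n ≤ Real.exp (1-2*Λ)^n := pow_le_pow_left₀ hy0 hyd n
      have g8 : Real.exp (1-2*Λ)^n = Real.exp ((n:ℝ)*(1-2*Λ)) := by
        rw [← Real.exp_nat_mul]
      have g9 : (2:ℝ)^n' ≤ Real.exp 1^n' := pow_le_pow_left₀ (by norm_num) h2e n'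
      have g10 : Real.exp 1^n' = Real.exp (n':ℝ) := by
        rw [← Real.exp_nat_mul, mul_one]
      calc (c⁻¹*t^2)^n * 2^n'
          ≤ Real.exp (1-2*Λ)^n * Real.exp 1^n' := by
            refine mul_le_mul g7 g9 (by positivity) (by positivity)
        _ = Real.exp ((n:ℝ)*(1-2*Λ)) * Real.exp (n':ℝ) := by rw [g8, g10]
    have habs3 : |∑ k ∈ Finset.range (D+1),
        (1 - c⁻¹*t^2)^k * (c⁻¹*t^2)^(n'-k) * (n'.choose k : ℝ)|
          ≤ Real.exp ((n:ℝ)*(1 - 2*Λ)) * Real.exp (n':ℝ) := by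
      rw [abs_of_nonneg hg0]; exact hsum_le
    have hfinal : Real.exp LC * (Real.exp ((n:ℝ)*(1 - 2*Λ)) * Real.exp (n':ℝ))
        ≤ Real.exp (-2*(M:ℝ)) := by
      rw [← Real.exp_add, ← Real.exp_add]
      refine Real.exp_le_exp.mpr ?_
      have hn'r : ((n':ℕ):ℝ) = (n:ℝ) + (D:ℝ) := by rw [hn'def]; push_cast; ring
      rw [hn'r, hMr]
      linarith [hkey]
    calc |Q.eval t| * |∑ k ∈ Finset.range (D+1),
          (1 - c⁻¹*t^2)^k * (c⁻¹*t^2)^(n'-k) * (n'.choose k : ℝ)|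
        ≤ Real.exp LC * (Real.exp ((n:ℝ)*(1 - 2*Λ)) * Real.exp (n':ℝ)) := by
          refine mul_le_mul ((hQ1 t ht1).trans hALC) habs3 (abs_nonneg _) (Real.exp_pos _).le
      _ ≤ Real.exp (-2*(M:ℝ)) := hfinal
end
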